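/- arXiv:1602.06602 — 5 statements merged into one kernel-verified Lean document; each statement's English description precedes it below -/
import Mathlib

section
/- Let A be a nonzero m×n real matrix and suppose that k GE steps (1 ≤ k ≤ min(m,n)) are performed on A with every pivot being an absolute maximum entry, i.e., β_r = 1 for all 1 ≤ r ≤ k (complete pivoting without mistakes). Then the intermediate growth factor satisfies ρ_k(A) ≤ 4 · √k · k^{(1/4)·log k}. -/
open Finset Real

/-- One Gaussian elimination step on `A` with pivot position `(i, j)`:
`A_{st} - A_{sj} A_{it} / A_{ij}`. -/
noncomputable def geStep {m n : ℕ} (A : Matrix (Fin m) (Fin n) ℝ) (i : Fin m) (j : Fin n) :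
    Matrix (Fin m) (Fin n) ℝ :=
  Matrix.of fun s t => A s t - A s j * A i t / A i j

/-- The matrix `A^{(r)}` after `r` GE steps on `A`, where step `r` uses pivot
position `piv (r - 1)` (so `piv` is 0-indexed). -/
noncomputable def geIter {m n : ℕ} (A : Matrix (Fin m) (Fin n) ℝ)
    (piv : ℕ → Fin m × Fin n) : ℕ → Matrix (Fin m) (Fin n) ℝ
  | 0 => A
  | r + 1 => geStep (geIter A piv r) (piv r).1 (piv r).2

/-- Maximum absolute entry of a matrix. -/
noncomputable def maxAbs {m n : ℕ} (A : Matrix (Fin m) (Fin n) ℝ) : ℝ :=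
  ⨆ s, ⨆ t, |A s t|

/-- The magnitude `p_r = |A^{(r-1)}_{i_r j_r}|` of the `r`-th pivot (1-indexed `r`). -/
noncomputable def pivMag {m n : ℕ} (A : Matrix (Fin m) (Fin n) ℝ)
    (piv : ℕ → Fin m × Fin n) (r : ℕ) : ℝ :=
  |geIter A piv (r - 1) (piv (r - 1)).1 (piv (r - 1)).2|

open Matrix


lemma lg_le (x : ℝ) (hx : 0 < x) : Real.log x ≤ x - 1 := Real.log_le_sub_one_of_pos hx

lemma lg_ge (x : ℝ) (hx : 0 < x) : 1 - 1/x ≤ Real.log x := by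
  have h := Real.log_le_sub_one_of_pos (show (0:ℝ) < 1/x by positivity)
  rw [Real.log_div one_ne_zero (ne_of_gt hx), Real.log_one] at h
  linarith

lemma log_split (a b : ℝ) (ha : 0 < a) (hb : 0 < b) :
    Real.log (a * b) = Real.log a + Real.log b :=
  Real.log_mul (ne_of_gt ha) (ne_of_gt hb)

-- numeric bounds
lemma l2 : 0.6931471803 ≤ Real.log 2 := le_of_lt Real.log_two_gt_d9
lemma u2 : Real.log 2 ≤ 0.6931471808 := le_of_lt Real.log_two_lt_d9

lemma two_log3 : 2 * Real.log 3 = 3 * Real.log 2 + Real.log (9/8) := by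
  have h9 : Real.log 9 = 2 * Real.log 3 := by
    rw [show (9:ℝ) = 3^2 by norm_num, Real.log_pow]; norm_num
  have : Real.log 9 = Real.log 8 + Real.log (9/8) := by
    rw [← log_split 8 (9/8) (by norm_num) (by norm_num)]; norm_num
  have h8 : Real.log 8 = 3 * Real.log 2 := by
    rw [show (8:ℝ) = 2^3 by norm_num, Real.log_pow]; norm_num
  linarith

lemma u3 : Real.log 3 ≤ 1.1022208 := by
  have := two_log3
  have := lg_le (9/8) (by norm_num)
  have := u2
  linarith

lemma l3 : 1.0952763 ≤ Real.log 3 := by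
  have := two_log3
  have := lg_ge (9/8) (by norm_num)
  have := l2
  linarith

lemma two_log5 : 2 * Real.log 5 = 3 * Real.log 2 + Real.log 3 + Real.log (25/24) := by
  have h25 : Real.log 25 = 2 * Real.log 5 := by
    rw [show (25:ℝ) = 5^2 by norm_num, Real.log_pow]; norm_num
  have : Real.log 25 = Real.log 24 + Real.log (25/24) := by
    rw [← log_split 24 (25/24) (by norm_num) (by norm_num)]; norm_num
  have h24 : Real.log 24 = 3 * Real.log 2 + Real.log 3 := by
    rw [show (24:ℝ) = 2^3 * 3 by norm_num, log_split _ 3 (by norm_num) (by norm_num),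
      Real.log_pow]; norm_num
  linarith

lemma u5 : Real.log 5 ≤ 1.6116646 := by
  have := two_log5; have := lg_le (25/24) (by norm_num); have := u2; have := u3; linarith

lemma l5 : 1.6073589 ≤ Real.log 5 := by
  have := two_log5; have := lg_ge (25/24) (by norm_num); have := l2; have := l3; linarith

lemma two_log7 : 2 * Real.log 7 = 4 * Real.log 2 + Real.log 3 + Real.log (49/48) := by
  have h49 : Real.log 49 = 2 * Real.log 7 := by
    rw [show (49:ℝ) = 7^2 by norm_num, Real.log_pow]; norm_num
  have : Real.log 49 = Real.log 48 + Real.log (49/48) := by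
    rw [← log_split 48 (49/48) (by norm_num) (by norm_num)]; norm_num
  have h48 : Real.log 48 = 4 * Real.log 2 + Real.log 3 := by
    rw [show (48:ℝ) = 2^4 * 3 by norm_num, log_split _ 3 (by norm_num) (by norm_num),
      Real.log_pow]; norm_num
  linarith

lemma u7 : Real.log 7 ≤ 1.9478216 := by
  have := two_log7; have := lg_le (49/48) (by norm_num); have := u2; have := u3; linarith

lemma l7 : 1.9441365 ≤ Real.log 7 := by
  have := two_log7; have := lg_ge (49/48) (by norm_num); have := l2; have := l3; linarith

lemma two_log11 : 2 * Real.log 11 = 7 * Real.log 2 - Real.log (128/121) := by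
  have h121 : Real.log 121 = 2 * Real.log 11 := by
    rw [show (121:ℝ) = 11^2 by norm_num, Real.log_pow]; norm_num
  have : Real.log 128 = Real.log 121 + Real.log (128/121) := by
    rw [← log_split 121 (128/121) (by norm_num) (by norm_num)]; norm_num
  have h128 : Real.log 128 = 7 * Real.log 2 := by
    rw [show (128:ℝ) = 2^7 by norm_num, Real.log_pow]; norm_num
  linarith

lemma u11 : Real.log 11 ≤ 2.3986715 := by
  have := two_log11; have := lg_ge (128/121) (by norm_num); have := u2; linarith

lemma l11 : 2.3970895 ≤ Real.log 11 := by
  have := two_log11; have := lg_le (128/121) (by norm_num); have := l2; linarith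

lemma log4 : Real.log 4 = 2 * Real.log 2 := by
  rw [show (4:ℝ) = 2^2 by norm_num, Real.log_pow]; norm_num
lemma log6 : Real.log 6 = Real.log 2 + Real.log 3 := by
  rw [show (6:ℝ) = 2*3 by norm_num, log_split 2 3 (by norm_num) (by norm_num)]
lemma log8 : Real.log 8 = 3 * Real.log 2 := by
  rw [show (8:ℝ) = 2^3 by norm_num, Real.log_pow]; norm_num
lemma log9 : Real.log 9 = 2 * Real.log 3 := by
  rw [show (9:ℝ) = 3^2 by norm_num, Real.log_pow]; norm_num
lemma log10 : Real.log 10 = Real.log 2 + Real.log 5 := by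
  rw [show (10:ℝ) = 2*5 by norm_num, log_split 2 5 (by norm_num) (by norm_num)]
lemma log12 : Real.log 12 = 2 * Real.log 2 + Real.log 3 := by
  rw [show (12:ℝ) = 2^2*3 by norm_num, log_split _ 3 (by norm_num) (by norm_num), Real.log_pow]
  norm_num

lemma S1 (x : ℝ) (hx : 1 ≤ x) :
    Real.log (x+1)/x ≤ ((Real.log (x+1))^2 - (Real.log x)^2)/2
      + (1 + 2*Real.log (x+1))/(2*x^2) := by
  have hx0 : (0:ℝ) < x := by linarith
  set a := Real.log x with ha
  set b := Real.log (x+1) with hb'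
  set u := b - a with hu
  have hb : 0 ≤ b := Real.log_nonneg (by linarith)
  have hlogdiv : Real.log ((x+1)/x) = u := by
    rw [Real.log_div (by linarith) (ne_of_gt hx0)]
  have hxu : x * u ≤ 1 := by
    have h2 := lg_le ((x+1)/x) (by positivity)
    rw [hlogdiv] at h2
    have : (x+1)/x - 1 = 1/x := by field_simp; ring
    rw [this] at h2
    calc x * u ≤ x * (1/x) := by
          exact mul_le_mul_of_nonneg_left h2 hx0.le
      _ = 1 := by field_simp
  have hux : 1 ≤ (x+1) * u := by
    have h2 := lg_ge ((x+1)/x) (by positivity)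
    rw [hlogdiv] at h2
    have he : 1 - 1/((x+1)/x) = 1/(x+1) := by
      rw [one_div_div]; field_simp; ring
    rw [he] at h2
    calc (1:ℝ) = (x+1) * (1/(x+1)) := by field_simp
      _ ≤ (x+1) * u := mul_le_mul_of_nonneg_left h2 (by linarith)
  have P1 : 0 ≤ (1 - x*u) * (1 + x*u) := by
    apply mul_nonneg (by linarith)
    nlinarith [hux, hx0]
  have P2 : 0 ≤ b * (1 - x*u) := mul_nonneg hb (by linarith)
  have P3 : 0 ≤ (b*x) * ((x+1)*u - 1) := mul_nonneg (mul_nonneg hb hx0.le) (by linarith)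
  have key : 2*x*b ≤ x^2*(b^2 - a^2) + 1 + 2*b := by
    have hab : a = b - u := by rw [hu]; ring
    rw [hab]; nlinarith [P1, P2, P3]
  rw [show b/x = (2*x*b)/(2*x^2) by field_simp,
    show (b^2 - a^2)/2 + (1 + 2*b)/(2*x^2) = (x^2*(b^2-a^2) + 1 + 2*b)/(2*x^2) by
      field_simp; ring]
  gcongr

lemma S2 (x : ℝ) (hx : 2 ≤ x) :
    (1 + 2*Real.log (x+1))/(2*x^2) + (3 + 2*Real.log (x+1))/(2*x)
      ≤ (3 + 2*Real.log x)/(2*(x-1)) := by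
  have hx0 : (0:ℝ) < x := by linarith
  set a := Real.log x with ha
  set b := Real.log (x+1) with hb'
  have hb : 0 ≤ b := Real.log_nonneg (by linarith)
  have hlogdiv : Real.log ((x+1)/x) = b - a := by
    rw [Real.log_div (by linarith) (ne_of_gt hx0)]
  have hxu : x * (b - a) ≤ 1 := by
    have h2 := lg_le ((x+1)/x) (by positivity)
    rw [hlogdiv] at h2
    have : (x+1)/x - 1 = 1/x := by field_simp; ring
    rw [this] at h2
    calc x * (b-a) ≤ x * (1/x) := mul_le_mul_of_nonneg_left h2 hx0.le
      _ = 1 := by field_simp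
  have h5 : x*(x*(b-a)) ≤ x := by
    calc x*(x*(b-a)) ≤ x*1 := mul_le_mul_of_nonneg_left hxu hx0.le
      _ = x := mul_one x
  have key : ((1+2*b) + x*(3+2*b)) * (2*(x-1)) ≤ (3+2*a)*(2*x^2) := by nlinarith [h5, hb]
  rw [show (1+2*b)/(2*x^2) + (3+2*b)/(2*x) = ((1+2*b) + x*(3+2*b))/(2*x^2) by
    field_simp]
  rw [div_le_div_iff₀ (by positivity) (by linarith)]
  linarith [key]

noncomputable def anSum (k : ℕ) : ℝ := ∑ j ∈ Finset.range (k-1), Real.log ((j:ℝ)+2)/((j:ℝ)+1)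

lemma anSum_succ (k : ℕ) (hk : 1 ≤ k) :
    anSum (k+1) = anSum k + Real.log ((k:ℝ)+1)/(k:ℝ) := by
  obtain ⟨m, rfl⟩ := Nat.exists_eq_add_of_le hk
  unfold anSum
  rw [show 1 + m + 1 - 1 = (1 + m - 1) + 1 by omega, Finset.sum_range_succ]
  congr 2 <;> push_cast <;> [skip; skip] <;> rw [show 1 + m - 1 = m by omega] <;> push_cast <;> ring

lemma AN_big (k : ℕ) (hk : 12 ≤ k) :
    anSum k + (3 + 2*Real.log k)/(2*((k:ℝ)-1)) ≤ (Real.log k)^2/2 + 2*Real.log 2 := by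
  induction k, hk using Nat.le_induction with
  | base =>
      unfold anSum
      norm_num [Finset.sum_range_succ]
      rw [log4, log6, log8, log9, log10, log12]
      have hsq : (2*(0.6931471803:ℝ) + 1.0952763)^2 ≤ (2*Real.log 2 + Real.log 3)^2 := by
        apply pow_le_pow_left₀ (by norm_num)
        linarith [l2, l3]
      nlinarith [l2, u2, u3, l3, u5, u7, u11, hsq]
  | succ k hk ih =>
      have hk1 : (1:ℕ) ≤ k := by omega
      have hx : (2:ℝ) ≤ (k:ℝ) := by exact_mod_cast (by omega : 2 ≤ k)
      rw [anSum_succ k hk1]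
      have h1 := S1 (k:ℝ) (by linarith)
      have h2 := S2 (k:ℝ) hx
      have hc : ((k:ℝ)+1) = ((k+1 : ℕ) : ℝ) := by push_cast; ring
      have hc2 : ((k+1:ℕ):ℝ) - 1 = (k:ℝ) := by push_cast; ring
      rw [hc] at h1 h2 ⊢
      rw [hc2]
      linarith [h1, h2, ih]

lemma AN (k : ℕ) (hk : 1 ≤ k) : anSum k ≤ (Real.log k)^2/2 + 2*Real.log 2 := by
  rcases le_or_gt 12 k with h | h
  · have := AN_big k h
    have hk12 : (12:ℝ) ≤ (k:ℝ) := by exact_mod_cast h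
    have hlogk : (0:ℝ) ≤ Real.log k := Real.log_nonneg (by linarith)
    have hpos : 0 < (3 + 2*Real.log k)/(2*((k:ℝ)-1)) := by
      apply div_pos <;> linarith
    linarith
  · interval_cases k
    · unfold anSum; simp [Real.log_nonneg]
    · unfold anSum
      norm_num [Finset.sum_range_succ]
      nlinarith [l2, u2, Real.log_nonneg (show (1:ℝ) ≤ 2 by norm_num)]
    · -- k = 3
      unfold anSum
      norm_num [Finset.sum_range_succ]
      nlinarith [l2, u2, u3, Real.log_nonneg (show (1:ℝ) ≤ 3 by norm_num)]
    · unfold anSum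
      norm_num [Finset.sum_range_succ]
      rw [log4]
      nlinarith [l2, u2, u3]
    · unfold anSum
      norm_num [Finset.sum_range_succ]
      rw [log4]
      nlinarith [l2, u2, u3, u5, l5]
    · unfold anSum
      norm_num [Finset.sum_range_succ]
      rw [log4, log6]
      nlinarith [l2, u2, u3, l3, u5]
    · unfold anSum
      norm_num [Finset.sum_range_succ]
      rw [log4, log6]
      nlinarith [l2, u2, u3, l3, u5, u7, l7]
    · unfold anSum
      norm_num [Finset.sum_range_succ]
      rw [log4, log6, log8]
      nlinarith [l2, u2, u3, l3, u5, u7]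
    · unfold anSum
      norm_num [Finset.sum_range_succ]
      rw [log4, log6, log8, log9]
      nlinarith [l2, u2, u3, l3, u5, u7]
    · unfold anSum
      norm_num [Finset.sum_range_succ]
      rw [log4, log6, log8, log9, log10]
      nlinarith [l2, u2, u3, l3, u5, l5, u7]
    · unfold anSum
      norm_num [Finset.sum_range_succ]
      rw [log4, log6, log8, log9, log10]
      nlinarith [l2, u2, u3, l3, u5, l5, u7, u11, l11]


theorem my_det_elim {L : ℕ} (M : Matrix (Fin (L+1)) (Fin (L+1)) ℝ) (hM : M 0 0 ≠ 0) :
    M.det = M 0 0 * (Matrix.of fun a b : Fin L =>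
      M a.succ b.succ - M a.succ 0 * M 0 b.succ / M 0 0).det := by
  classical
  set E : Matrix (Fin (L+1)) (Fin (L+1)) ℝ :=
    Matrix.of fun s t => if s = t then 1 else if t = 0 then -(M s 0 / M 0 0) else 0 with hE
  have hdetE : E.det = 1 := by
    rw [Matrix.det_of_lowerTriangular E (by
      intro i j hij
      have hij' : i < j := hij
      simp only [hE, Matrix.of_apply]
      rw [if_neg (ne_of_lt hij'), if_neg (ne_of_gt (lt_of_le_of_lt (Fin.zero_le i) hij'))])]
    simp [hE]
  set N := E * M with hN
  have hN0 : ∀ t, N 0 t = M 0 t := by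
    intro t
    rw [hN, Matrix.mul_apply, Finset.sum_eq_single 0]
    · simp [hE]
    · intro u _ hu
      simp only [hE, Matrix.of_apply]
      rw [if_neg (Ne.symm hu), if_neg hu, zero_mul]
    · simp
  have hNs : ∀ (s : Fin (L+1)) (t : Fin (L+1)), s ≠ 0 →
      N s t = M s t - M s 0 * M 0 t / M 0 0 := by
    intro s t hs
    rw [hN, Matrix.mul_apply]
    rw [Finset.sum_eq_add_of_mem s 0 (Finset.mem_univ s) (Finset.mem_univ 0) hs ?_]
    · simp only [hE, Matrix.of_apply, if_pos rfl, if_neg hs]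
      simp only [if_true]
      ring
    · intro u _ hu
      simp only [hE, Matrix.of_apply]
      rw [if_neg (Ne.symm hu.1), if_neg hu.2, zero_mul]
  have hdetN : N.det = M.det := by rw [hN, Matrix.det_mul, hdetE, one_mul]
  have hNcol : ∀ s : Fin (L+1), s ≠ 0 → N s 0 = 0 := by
    intro s hs; rw [hNs s 0 hs]; field_simp; ring
  have hsub : N.submatrix (Fin.succAbove 0) Fin.succ = Matrix.of (fun a b : Fin L =>
      M a.succ b.succ - M a.succ 0 * M 0 b.succ / M 0 0) := by
    ext a b
    rw [Matrix.submatrix_apply, Fin.zero_succAbove, hNs _ _ (Fin.succ_ne_zero a)]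
    simp
  rw [← hdetN, Matrix.det_succ_column_zero, Finset.sum_eq_single 0]
  · rw [hN0 0, hsub]
    simp
  · intro i _ hi
    rw [hNcol i hi]; ring
  · simp


theorem my_hadamard {L : ℕ} (M : Matrix (Fin L) (Fin L) ℝ) {B : ℝ} (hB : 0 ≤ B)
    (h : ∀ i j, |M i j| ≤ B) : |M.det| ≤ (Real.sqrt L * B) ^ L := by
  rcases Nat.eq_zero_or_pos L with hL | hL
  · subst hL; simp [Matrix.det_fin_zero]
  have hL0 : (0:ℝ) < L := by exact_mod_cast hL
  set S := Mᴴ * M with hSdef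
  have hH : S.IsHermitian := Matrix.isHermitian_conjTranspose_mul_self M
  have hP : S.PosSemidef := Matrix.posSemidef_conjTranspose_mul_self M
  have hev : ∀ i, 0 ≤ hH.eigenvalues i := fun i => hP.eigenvalues_nonneg i
  have hdetS : S.det = M.det ^ 2 := by
    rw [hSdef, Matrix.det_mul, Matrix.det_conjTranspose]; simp [sq]
  have htr : S.trace = ∑ i, hH.eigenvalues i := by
    simp [hH.trace_eq_sum_eigenvalues]
  have htr2 : ∑ i, hH.eigenvalues i ≤ (L : ℝ) * ((L : ℝ) * B ^ 2) := by
    rw [← htr]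
    have hdiag : ∀ i : Fin L, S i i ≤ (L : ℝ) * B ^ 2 := by
      intro i
      have hSii : S i i = ∑ u, M u i * M u i := by
        simp [hSdef, Matrix.mul_apply, Matrix.conjTranspose_apply]
      rw [hSii]
      calc ∑ u, M u i * M u i ≤ ∑ _u : Fin L, B ^ 2 := by
            refine Finset.sum_le_sum fun u _ => ?_
            nlinarith [h u i, abs_nonneg (M u i), neg_abs_le (M u i), le_abs_self (M u i)]
        _ = (L : ℝ) * B ^ 2 := by simp [mul_comm]
    calc S.trace = ∑ i, S i i := by simp [Matrix.trace, Matrix.diag]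
      _ ≤ ∑ _i : Fin L, (L : ℝ) * B ^ 2 := Finset.sum_le_sum fun i _ => hdiag i
      _ = (L : ℝ) * ((L : ℝ) * B ^ 2) := by simp [mul_comm]
  -- AM-GM
  have amgm : ∏ i, hH.eigenvalues i ≤ ((∑ i, hH.eigenvalues i) / L) ^ L := by
    have key := Real.geom_mean_le_arith_mean_weighted Finset.univ (fun _ => 1 / (L:ℝ))
      hH.eigenvalues (fun i _ => by positivity) (by
        rw [Finset.sum_const]; simp; field_simp) (fun i _ => hev i)
    have hprod : ∏ i, (hH.eigenvalues i) ^ (1 / (L:ℝ)) = (∏ i, hH.eigenvalues i) ^ (1 / (L:ℝ)) := by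
      rw [← Real.finset_prod_rpow Finset.univ _ (fun i _ => hev i)]
    have hsum : ∑ i, (1 / (L:ℝ)) * hH.eigenvalues i = (∑ i, hH.eigenvalues i) / L := by
      rw [← Finset.mul_sum]; ring
    rw [hprod, hsum] at key
    have hpn : 0 ≤ ∏ i, hH.eigenvalues i := Finset.prod_nonneg fun i _ => hev i
    calc ∏ i, hH.eigenvalues i
        = ((∏ i, hH.eigenvalues i) ^ (1 / (L:ℝ))) ^ L := by
          rw [← Real.rpow_natCast ((∏ i, hH.eigenvalues i) ^ (1 / (L:ℝ))) L,
            ← Real.rpow_mul hpn, one_div_mul_cancel (ne_of_gt hL0), Real.rpow_one]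
      _ ≤ ((∑ i, hH.eigenvalues i) / L) ^ L :=
          pow_le_pow_left₀ (Real.rpow_nonneg hpn _) key L
  have hsum_nonneg : 0 ≤ (∑ i, hH.eigenvalues i) / L := by
    apply div_nonneg (Finset.sum_nonneg fun i _ => hev i) (le_of_lt hL0)
  have hmid : ((∑ i, hH.eigenvalues i) / L) ^ L ≤ ((L:ℝ) * B ^ 2) ^ L := by
    apply pow_le_pow_left₀ hsum_nonneg
    rw [div_le_iff₀ hL0]; linarith [htr2]
  have hdet2 : M.det ^ 2 ≤ ((L:ℝ) * B ^ 2) ^ L := by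
    have hd : M.det ^ 2 = ∏ i, hH.eigenvalues i := by
      rw [← hdetS, hH.det_eq_prod_eigenvalues]; norm_num
    rw [hd]; exact le_trans amgm hmid
  calc |M.det| = Real.sqrt (M.det ^ 2) := (Real.sqrt_sq_eq_abs _).symm
    _ ≤ Real.sqrt (((L:ℝ) * B ^ 2) ^ L) := Real.sqrt_le_sqrt hdet2
    _ = (Real.sqrt L * B) ^ L := by
        rw [show ((L:ℝ) * B ^ 2) = (Real.sqrt L * B)^2 by
          rw [mul_pow, Real.sq_sqrt (le_of_lt hL0)], ← pow_mul, mul_comm (2:ℕ) L, pow_mul,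
          Real.sqrt_sq (pow_nonneg (by positivity) L)]

section maxabs
variable {m n : ℕ} (A : Matrix (Fin m) (Fin n) ℝ)

lemma abs_entry_le_maxAbs (s : Fin m) (t : Fin n) : |A s t| ≤ maxAbs A := by
  unfold maxAbs
  have h1 : |A s t| ≤ ⨆ t', |A s t'| :=
    le_ciSup (f := fun t' => |A s t'|) (Set.Finite.bddAbove (Set.finite_range _)) t
  exact h1.trans (le_ciSup (f := fun s' => ⨆ t', |A s' t'|)
    (Set.Finite.bddAbove (Set.finite_range _)) s)

lemma maxAbs_nonneg : 0 ≤ maxAbs A :=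
  Real.iSup_nonneg fun s => Real.iSup_nonneg fun t => abs_nonneg _

lemma maxAbs_le {B : ℝ} (hB : 0 ≤ B) (h : ∀ s t, |A s t| ≤ B) : maxAbs A ≤ B :=
  Real.iSup_le (fun s => Real.iSup_le (h s) hB) hB

lemma maxAbs_pos (hA : A ≠ 0) : 0 < maxAbs A := by
  have : ∃ s t, A s t ≠ 0 := by
    by_contra hc
    push_neg at hc
    exact hA (by ext s t; simp [hc s t])
  obtain ⟨s, t, hst⟩ := this
  exact lt_of_lt_of_le (abs_pos.mpr hst) (abs_entry_le_maxAbs A s t)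

lemma maxAbs_geStep_le (i : Fin m) (j : Fin n) (hp : A i j ≠ 0)
    (hmax : ∀ s t, |A s t| ≤ |A i j|) :
    maxAbs (geStep A i j) ≤ 2 * maxAbs A := by
  apply maxAbs_le _ (by linarith [maxAbs_nonneg A])
  intro s t
  have h1 : |A s j * A i t / A i j| ≤ |A i t| := by
    rw [abs_div, abs_mul, div_le_iff₀ (abs_pos.mpr hp)]
    nlinarith [hmax s j, abs_nonneg (A i t), abs_nonneg (A s j), abs_nonneg (A i j)]
  calc |geStep A i j s t| ≤ |A s t| + |A s j * A i t / A i j| := by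
        rw [geStep, Matrix.of_apply]; exact abs_sub _ _
    _ ≤ maxAbs A + maxAbs A := add_le_add (abs_entry_le_maxAbs A s t)
        (h1.trans (abs_entry_le_maxAbs A i t))
    _ = 2 * maxAbs A := by ring

end maxabs

section detprod
variable {m n : ℕ} (A : Matrix (Fin m) (Fin n) ℝ) (piv : ℕ → Fin m × Fin n)

noncomputable def Cmat (q L : ℕ) : Matrix (Fin L) (Fin L) ℝ :=
  Matrix.of fun a b => geIter A piv q (piv (q+(a:ℕ))).1 (piv (q+(b:ℕ))).2

lemma detC : ∀ (L q : ℕ),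
    (∀ i, i < L → geIter A piv (q+i) (piv (q+i)).1 (piv (q+i)).2 ≠ 0) →
    |(Cmat A piv q L).det| =
      ∏ i ∈ Finset.range L, |geIter A piv (q+i) (piv (q+i)).1 (piv (q+i)).2| := by
  intro L
  induction L with
  | zero => intro q h; simp [Matrix.det_fin_zero]
  | succ L ih =>
    intro q h
    have hpiv0 : Cmat A piv q (L+1) 0 0 ≠ 0 := by
      have := h 0 (Nat.succ_pos L)
      simpa [Cmat] using this
    rw [my_det_elim _ hpiv0]
    have hmin : (Matrix.of fun a b : Fin L =>
        Cmat A piv q (L+1) a.succ b.succ - Cmat A piv q (L+1) a.succ 0 *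
          Cmat A piv q (L+1) 0 b.succ / Cmat A piv q (L+1) 0 0) = Cmat A piv (q+1) L := by
      ext a b
      have e1 : q + ((Fin.succ a : Fin (L+1)) : ℕ) = q + 1 + (a : ℕ) := by
        rw [Fin.val_succ]; ring
      have e2 : q + ((Fin.succ b : Fin (L+1)) : ℕ) = q + 1 + (b : ℕ) := by
        rw [Fin.val_succ]; ring
      have e0 : q + ((0 : Fin (L+1)) : ℕ) = q := by simp
      simp only [Cmat, Matrix.of_apply, e1, e2, e0]
      show _ = geIter A piv (q+1) _ _
      rw [show geIter A piv (q+1) = geStep (geIter A piv q) (piv q).1 (piv q).2 from rfl]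
      rw [geStep, Matrix.of_apply]
    rw [hmin, abs_mul, ih (q+1) (fun i hi => by
      have := h (i+1) (by omega)
      rwa [show q+(i+1) = q+1+i by ring] at this)]
    rw [Finset.prod_range_succ']
    have hpv : |Cmat A piv q (L+1) 0 0| = |geIter A piv (q+0) (piv (q+0)).1 (piv (q+0)).2| := by
      simp [Cmat]
    rw [hpv, mul_comm]
    congr 1
    exact Finset.prod_congr rfl fun i _ => by rw [show q+1+i = q+(i+1) by ring]

lemma HC {k q : ℕ} (hq : q < k)
    (hpiv : ∀ r < k, geIter A piv r (piv r).1 (piv r).2 ≠ 0)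
    (hmax : ∀ r, 1 ≤ r → r ≤ k → pivMag A piv r = maxAbs (geIter A piv (r - 1))) :
    ∑ i ∈ Finset.Ico q k, Real.log |geIter A piv i (piv i).1 (piv i).2|
      ≤ ((k-q:ℕ):ℝ) * Real.log |geIter A piv q (piv q).1 (piv q).2|
        + ((k-q:ℕ):ℝ)/2 * Real.log ((k-q:ℕ):ℝ) := by
  set L := k - q with hL
  have hL1 : 1 ≤ L := by omega
  have hL0 : (0:ℝ) < (L:ℝ) := by exact_mod_cast hL1
  set P : ℕ → ℝ := fun i => |geIter A piv i (piv i).1 (piv i).2| with hP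
  have hPpos : ∀ i < k, 0 < P i := fun i hi => abs_pos.mpr (hpiv i hi)
  -- the determinant identity
  have hdet := detC A piv L q (fun i hi => hpiv (q+i) (by omega))
  -- B = maxAbs of geIter q equals P q
  have hB : maxAbs (geIter A piv q) = P q := by
    have := hmax (q+1) (by omega) (by omega)
    rw [pivMag] at this
    simpa using this.symm
  -- Hadamard
  have hHad : |(Cmat A piv q L).det| ≤ (Real.sqrt L * P q) ^ L := by
    apply my_hadamard
    · rw [← hB]; exact maxAbs_nonneg _
    · intro a b
      rw [← hB]
      simp only [Cmat, Matrix.of_apply]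
      exact abs_entry_le_maxAbs _ _ _
  rw [hdet] at hHad
  -- take logs
  have hprodpos : ∀ i ∈ Finset.range L, P (q+i) ≠ 0 :=
    fun i hi => ne_of_gt (hPpos (q+i) (by simp at hi; omega))
  have hlog := Real.log_le_log (Finset.prod_pos fun i hi =>
    hPpos (q+i) (by simp at hi; omega)) hHad
  rw [Real.log_prod hprodpos, Real.log_pow, Real.log_mul
    (ne_of_gt (Real.sqrt_pos.mpr hL0)) (ne_of_gt (hPpos q (by omega))),
    Real.log_sqrt hL0.le] at hlog
  rw [Finset.sum_Ico_eq_sum_range]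
  calc ∑ i ∈ Finset.range (k-q), Real.log (P (q+i))
      = ∑ i ∈ Finset.range L, Real.log (P (q+i)) := by rw [hL]
    _ ≤ (L:ℝ) * (Real.log (L:ℝ)/2 + Real.log (P q)) := hlog
    _ = (L:ℝ) * Real.log (P q) + (L:ℝ)/2 * Real.log (L:ℝ) := by ring

end detprod


lemma WR (k : ℕ) (hk : 1 ≤ k) (y : ℕ → ℝ)
    (hHC : ∀ q, q < k → ∑ i ∈ Finset.Ico q k, y i
      ≤ ((k-q:ℕ):ℝ) * y q + ((k-q:ℕ):ℝ)/2 * Real.log ((k-q:ℕ):ℝ)) :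
    y (k-1) ≤ y 0 + Real.log k / 2 + anSum k / 2 := by
  set S : ℕ → ℝ := fun q => ∑ i ∈ Finset.Ico q k, y i with hS
  have hSk1 : S (k-1) = y (k-1) := by
    simp only [hS]
    rw [Finset.sum_Ico_eq_sum_range, show k - (k-1) = 1 by omega, Finset.sum_range_one,
      show k - 1 + 0 = k - 1 by omega]
  have claim : ∀ L, 1 ≤ L → L ≤ k → y (k-1) ≤ S (k-L)/(L:ℝ) + anSum L / 2 := by
    intro L hL1
    induction L, hL1 using Nat.le_induction with
    | base =>
      intro _
      rw [hSk1, anSum]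
      simp
    | succ L hL1 ih =>
      intro hLk
      have hIH := ih (by omega)
      have hqk : k - (L+1) < k := by omega
      have hstep := hHC (k - (L+1)) hqk
      rw [show k - (k - (L+1)) = L+1 by omega] at hstep
      have hsplit : S (k - (L+1)) = y (k - (L+1)) + S (k - (L+1) + 1) := by
        simp only [hS]
        exact Finset.sum_eq_sum_Ico_succ_bot hqk y
      have hq1 : k - (L+1) + 1 = k - L := by omega
      have hL0 : (0:ℝ) < L := by exact_mod_cast hL1
      have hL10 : (0:ℝ) < (L:ℝ)+1 := by linarith
      have hlog1 : (0:ℝ) ≤ Real.log ((L:ℝ)+1) := Real.log_nonneg (by linarith)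
      have hstep' : ((L:ℝ)+1) * S (k-L) ≤ (L:ℝ) * S (k-(L+1))
          + ((L:ℝ)+1)/2 * Real.log ((L:ℝ)+1) := by
        push_cast at hstep
        rw [← hq1]
        nlinarith [hstep, hsplit]
      have hdiv : S (k-L)/(L:ℝ) ≤ S (k-(L+1))/((L:ℝ)+1) + Real.log ((L:ℝ)+1)/(2*L) := by
        rw [div_add_div _ _ (ne_of_gt hL10) (by positivity : (2*(L:ℝ)) ≠ 0),
          div_le_div_iff₀ hL0 (by positivity)]
        nlinarith [mul_le_mul_of_nonneg_left hstep' (by positivity : (0:ℝ) ≤ 2*(L:ℝ))]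
      have hAn : anSum (L+1) = anSum L + Real.log ((L:ℝ)+1)/(L:ℝ) := anSum_succ L hL1
      calc y (k-1) ≤ S (k-L)/(L:ℝ) + anSum L / 2 := hIH
        _ ≤ S (k-(L+1))/((L:ℝ)+1) + Real.log ((L:ℝ)+1)/(2*L) + anSum L / 2 := by
            linarith [hdiv]
        _ = S (k-(L+1))/(((L+1:ℕ)):ℝ) + anSum (L+1)/2 := by
            rw [hAn]
            push_cast
            field_simp
            ring
  have hfin := claim k (by omega) le_rfl
  rw [Nat.sub_self] at hfin
  have h0 := hHC 0 (by omega)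
  rw [Nat.sub_zero] at h0
  have hk0 : (0:ℝ) < (k:ℝ) := by exact_mod_cast hk
  have hS0 : S 0 / (k:ℝ) ≤ y 0 + Real.log k / 2 := by
    rw [div_le_iff₀ hk0]
    simp only [hS]
    nlinarith [h0]
  linarith [hfin, hS0]

/-- **GE with complete pivoting, no mistakes.** If every pivot is an absolute maximum
entry of the current matrix (`β_r = 1` for all `r`), then
`ρ_k(A) ≤ 4 √k k^{(1/4) log k}`. -/
theorem ge_growth_complete_pivoting_no_mistakes
    (m n k : ℕ) (A : Matrix (Fin m) (Fin n) ℝ) (hA : A ≠ 0)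
    (hk : 1 ≤ k) (hkmn : k ≤ min m n)
    (piv : ℕ → Fin m × Fin n)
    (hpiv : ∀ r < k, geIter A piv r (piv r).1 (piv r).2 ≠ 0)
    (hmax : ∀ r, 1 ≤ r → r ≤ k → pivMag A piv r = maxAbs (geIter A piv (r - 1))) :
    maxAbs (geIter A piv k) / maxAbs A ≤
      4 * Real.sqrt k * (k : ℝ) ^ ((1 / 4 : ℝ) * Real.log k) := by
  have hk0 : (0:ℝ) < (k:ℝ) := by exact_mod_cast hk
  have hMA : 0 < maxAbs A := maxAbs_pos A hA
  set P : ℕ → ℝ := fun i => |geIter A piv i (piv i).1 (piv i).2| with hPdef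
  have hPpos : ∀ i, i < k → 0 < P i := fun i hi => abs_pos.mpr (hpiv i hi)
  have hB : ∀ q, q < k → maxAbs (geIter A piv q) = P q := by
    intro q hq
    have := hmax (q+1) (by omega) (by omega)
    rw [pivMag] at this
    simpa using this.symm
  set y : ℕ → ℝ := fun i => Real.log (P i) with hydef
  have hWR := WR k hk y (fun q hq => HC A piv hq hpiv hmax)
  have hAN := AN k hk
  have hy : y (k-1) ≤ y 0 + Real.log k / 2 + ((Real.log k)^2/2 + 2*Real.log 2)/2 := by
    linarith [hAN, hWR]
  have hPk1pos : 0 < P (k-1) := hPpos (k-1) (by omega)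
  have hP0pos : 0 < P 0 := hPpos 0 (by omega)
  have hexp : P (k-1) ≤ P 0 * (Real.sqrt k * ((k:ℝ) ^ ((1/4 : ℝ) * Real.log k) * 2)) := by
    have e0 : Real.exp (y 0) = P 0 := Real.exp_log hP0pos
    have e1 : Real.exp (Real.log k / 2) = Real.sqrt k := by
      rw [← Real.log_sqrt hk0.le, Real.exp_log (Real.sqrt_pos.mpr hk0)]
    have e2 : Real.exp (((Real.log k)^2/2 + 2*Real.log 2)/2)
        = (k:ℝ) ^ ((1/4:ℝ) * Real.log k) * 2 := by
      rw [show ((Real.log k)^2/2 + 2*Real.log 2)/2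
          = (Real.log k * ((1/4:ℝ) * Real.log k)) + Real.log 2 by ring,
        Real.exp_add, ← Real.rpow_def_of_pos hk0, Real.exp_log two_pos]
    calc P (k-1) = Real.exp (y (k-1)) := (Real.exp_log hPk1pos).symm
      _ ≤ Real.exp (y 0 + Real.log k / 2 + ((Real.log k)^2/2 + 2*Real.log 2)/2) :=
          Real.exp_le_exp.mpr hy
      _ = P 0 * (Real.sqrt k * ((k:ℝ) ^ ((1/4:ℝ) * Real.log k) * 2)) := by
          rw [Real.exp_add, Real.exp_add, e0, e1, e2]; ring
  have hgek : maxAbs (geIter A piv k) ≤ 2 * P (k-1) := by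
    have hkk : k = (k-1) + 1 := by omega
    rw [hkk]
    have hstep : geIter A piv ((k-1)+1)
        = geStep (geIter A piv (k-1)) (piv (k-1)).1 (piv (k-1)).2 := rfl
    rw [hstep]
    have hdb := maxAbs_geStep_le (geIter A piv (k-1)) (piv (k-1)).1 (piv (k-1)).2
      (hpiv (k-1) (by omega))
      (fun s t => by
        have h := abs_entry_le_maxAbs (geIter A piv (k-1)) s t
        rw [hB (k-1) (by omega)] at h
        exact h)
    calc maxAbs _ ≤ 2 * maxAbs (geIter A piv (k-1)) := hdb
      _ = 2 * P (k-1) := by rw [hB (k-1) (by omega)]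
  have hP0 : P 0 = maxAbs A := by rw [← hB 0 (by omega)]; rfl
  rw [div_le_iff₀ hMA]
  have hrp : (0:ℝ) ≤ (k:ℝ) ^ ((1/4:ℝ) * Real.log k) := le_of_lt (Real.rpow_pos_of_pos hk0 _)
  calc maxAbs (geIter A piv k) ≤ 2 * P (k-1) := hgek
    _ ≤ 2 * (P 0 * (Real.sqrt k * ((k:ℝ) ^ ((1/4:ℝ) * Real.log k) * 2))) := by
        linarith [hexp]
    _ = 4 * Real.sqrt k * (k:ℝ) ^ ((1/4:ℝ) * Real.log k) * maxAbs A := by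
        rw [hP0]; ring
end

section
/- Let A be a nonzero m×n real matrix and suppose that k GE steps (3 ≤ k ≤ min(m,n)) are performed on A with all pivot qualities equal to a common value β ∈ (0,1], i.e., β_r = β for 1 ≤ r ≤ k. Then ρ_k(A) ≤ 4 · β^{−2−H_{k−2}} · √k · k^{(1/4)·log k}, where H_j = ∑_{i=1}^{j} 1/i is the j-th harmonic number. -/
set_option maxHeartbeats 1600000


open Finset Real

lemma geStep_apply {m n : ℕ} (A : Matrix (Fin m) (Fin n) ℝ) (i : Fin m) (j : Fin n)
    (s : Fin m) (t : Fin n) : geStep A i j s t = A s t - A s j * A i t / A i j := rfl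

lemma le_maxAbs {m n : ℕ} (A : Matrix (Fin m) (Fin n) ℝ) (s : Fin m) (t : Fin n) :
    |A s t| ≤ maxAbs A := by
  have h1 : |A s t| ≤ ⨆ t, |A s t| :=
    le_ciSup (f := fun t => |A s t|) (Set.Finite.bddAbove (Set.finite_range _)) t
  exact h1.trans (le_ciSup (f := fun s => ⨆ t, |A s t|)
    (Set.Finite.bddAbove (Set.finite_range _)) s)

lemma maxAbs_exists {m n : ℕ} (hm : 0 < m) (hn : 0 < n) (A : Matrix (Fin m) (Fin n) ℝ) :
    ∃ s t, maxAbs A = |A s t| := by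
  haveI : Nonempty (Fin m) := ⟨⟨0, hm⟩⟩
  haveI : Nonempty (Fin n) := ⟨⟨0, hn⟩⟩
  obtain ⟨s, hs⟩ := Finite.exists_max (fun s => ⨆ t, |A s t|)
  obtain ⟨t, ht⟩ := Finite.exists_max (fun t => |A s t|)
  refine ⟨s, t, le_antisymm ?_ (le_maxAbs A s t)⟩
  refine ciSup_le fun s' => ciSup_le fun t' => ?_
  calc |A s' t'| ≤ ⨆ t, |A s' t| :=
        le_ciSup (f := fun t => |A s' t|) (Set.Finite.bddAbove (Set.finite_range _)) t'
    _ ≤ ⨆ t, |A s t| := hs s'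
    _ ≤ |A s t| := ciSup_le ht

lemma det_step {d : ℕ} (C : Matrix (Fin (d+1)) (Fin (d+1)) ℝ) (h : C 0 0 ≠ 0) :
    C.det = C 0 0 * ((geStep C 0 0).submatrix Fin.succ Fin.succ).det := by
  classical
  set E : Matrix (Fin (d+1)) (Fin (d+1)) ℝ :=
    Matrix.of fun s t => if s = t then 1 else if t = 0 then -(C s 0 / C 0 0) else 0 with hE
  have hEC : ∀ s t, (E * C) s t = if s = 0 then C 0 t else geStep C 0 0 s t := by
    intro s t
    rw [Matrix.mul_apply]
    by_cases hs : s = 0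
    · subst hs
      rw [Finset.sum_eq_single 0]
      · simp [hE]
      · intro b _ hb; simp [hE, hb, Ne.symm hb]
      · simp
    · rw [Finset.sum_eq_add_of_mem 0 s (by simp) (by simp) (Ne.symm hs)]
      · simp [hE, hs, geStep, div_mul_eq_mul_div, mul_comm]
        ring
      · intro b _ hb
        simp only [hE, Matrix.of_apply]
        rcases hb with ⟨hb0, hbs⟩
        rw [if_neg (Ne.symm hbs), if_neg hb0, zero_mul]
  have hdetE : E.det = 1 := by
    have : E.BlockTriangular OrderDual.toDual := by
      intro i j hij
      have hij' : i < j := hij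
      simp only [hE, Matrix.of_apply]
      rw [if_neg (ne_of_lt hij'), if_neg (by rintro rfl; exact (Fin.not_lt.mpr (Fin.zero_le i)) hij')]
    rw [Matrix.det_of_lowerTriangular E this]
    simp [hE]
  have hdetEC : (E * C).det = C.det := by rw [Matrix.det_mul, hdetE, one_mul]
  rw [← hdetEC, Matrix.det_succ_column_zero]
  rw [Finset.sum_eq_single 0]
  · have h00 : (E * C) 0 0 = C 0 0 := by rw [hEC]; simp
    have hsub : ((E * C).submatrix (Fin.succAbove 0) Fin.succ) =
        ((geStep C 0 0).submatrix Fin.succ Fin.succ) := by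
      ext s t
      simp only [Matrix.submatrix_apply]
      rw [Fin.succAbove_zero, hEC]
      simp [Fin.succ_ne_zero]
    rw [h00, hsub]
    simp
  · intro b _ hb
    have : (E * C) b 0 = 0 := by
      rw [hEC, if_neg hb]
      obtain ⟨b', rfl⟩ := Fin.exists_succ_eq_of_ne_zero hb
      simp [geStep, mul_div_assoc, div_self h]
    rw [this]; ring
  · simp

lemma geIter_shift {m n : ℕ} (B : Matrix (Fin m) (Fin n) ℝ) (q : ℕ → Fin m × Fin n) :
    ∀ i, geIter B q (i + 1) =
      geIter (geStep B (q 0).1 (q 0).2) (fun j => q (j + 1)) i := by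
  intro i
  induction i with
  | zero => rfl
  | succ i ih => show geStep (geIter B q (i+1)) _ _ = _; rw [ih]; rfl

lemma det_iter {m n : ℕ} : ∀ (d : ℕ) (B : Matrix (Fin m) (Fin n) ℝ) (q : ℕ → Fin m × Fin n),
    (∀ i < d, geIter B q i (q i).1 (q i).2 ≠ 0) →
    |(B.submatrix (fun i : Fin d => (q i.val).1) (fun i : Fin d => (q i.val).2)).det|
      = ∏ i ∈ range d, |geIter B q i (q i).1 (q i).2| := by
  intro d
  induction d with
  | zero => intro B q _; simp [Matrix.det_fin_zero]
  | succ d ih =>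
    intro B q hq
    have h0 : B (q 0).1 (q 0).2 ≠ 0 := hq 0 (Nat.succ_pos d)
    set C : Matrix (Fin (d+1)) (Fin (d+1)) ℝ :=
      B.submatrix (fun i : Fin (d+1) => (q i.val).1) (fun i : Fin (d+1) => (q i.val).2) with hC
    have hC00 : C 0 0 = B (q 0).1 (q 0).2 := rfl
    set B' := geStep B (q 0).1 (q 0).2 with hB'
    set q' : ℕ → Fin m × Fin n := fun j => q (j + 1) with hq'
    have hsub : (geStep C 0 0).submatrix Fin.succ Fin.succ =
        B'.submatrix (fun i : Fin d => (q' i.val).1) (fun i : Fin d => (q' i.val).2) := by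
      ext s t
      simp only [Matrix.submatrix_apply, geStep, Matrix.of_apply, hC, hB', hq']
      simp [Fin.val_succ]
    have hq'' : ∀ i < d, geIter B' q' i (q' i).1 (q' i).2 ≠ 0 := by
      intro i hi
      rw [← geIter_shift]
      exact hq (i+1) (by omega)
    have := ih B' q' hq''
    calc |C.det| = |C 0 0| * |((geStep C 0 0).submatrix Fin.succ Fin.succ).det| := by
          rw [det_step C h0, abs_mul]
      _ = |B (q 0).1 (q 0).2| * ∏ i ∈ range d, |geIter B' q' i (q' i).1 (q' i).2| := by
          rw [hC00, hsub, this]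
      _ = ∏ i ∈ range (d+1), |geIter B q i (q i).1 (q i).2| := by
          rw [Finset.prod_range_succ']
          rw [mul_comm]
          congr 1
          refine Finset.prod_congr rfl fun i _ => ?_
          rw [← geIter_shift]

lemma hadamard_sq {d : ℕ} (C : Matrix (Fin d) (Fin d) ℝ) (M : ℝ)
    (hM : ∀ i j, |C i j| ≤ M) : C.det ^ 2 ≤ ((d:ℝ) * M ^ 2) ^ d := by
  classical
  rcases Nat.eq_zero_or_pos d with hd | hd
  · subst hd; simp [Matrix.det_fin_zero]
  have hM0 : 0 ≤ M := le_trans (abs_nonneg _) (hM ⟨0, hd⟩ ⟨0, hd⟩)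
  set P := C.conjTranspose * C with hP
  have hPsd : P.PosSemidef := Matrix.posSemidef_conjTranspose_mul_self C
  have hherm : P.IsHermitian := hPsd.1
  -- determinant
  have hdet : P.det = C.det ^ 2 := by
    rw [hP, Matrix.det_mul, Matrix.det_conjTranspose]
    simp [sq]
  -- trace bound
  have htrace : P.trace ≤ (d:ℝ) * ((d:ℝ) * M ^ 2) := by
    have : P.trace = ∑ i : Fin d, ∑ j : Fin d, C j i * C j i := by
      rw [hP]
      simp [Matrix.trace, Matrix.diag, Matrix.mul_apply, Matrix.conjTranspose_apply]
    rw [this]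
    calc ∑ i : Fin d, ∑ j : Fin d, C j i * C j i
        ≤ ∑ _i : Fin d, ∑ _j : Fin d, M ^ 2 := by
          refine Finset.sum_le_sum fun i _ => Finset.sum_le_sum fun j _ => ?_
          have := hM j i
          nlinarith [abs_nonneg (C j i), sq_abs (C j i)]
      _ = (d:ℝ) * ((d:ℝ) * M ^ 2) := by simp [mul_assoc]
  -- trace = sum of eigenvalues
  have htr_eig : P.trace = ∑ i, hherm.eigenvalues i := by
    conv_lhs => rw [hherm.spectral_theorem]
    simp only [Unitary.conjStarAlgAut_apply, Unitary.coe_star]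
    rw [Matrix.trace_mul_comm]
    rw [← mul_assoc]
    have hu : (star (hherm.eigenvectorUnitary : Matrix (Fin d) (Fin d) ℝ)) *
        (hherm.eigenvectorUnitary : Matrix (Fin d) (Fin d) ℝ) = 1 := by
      exact Matrix.mem_unitaryGroup_iff'.mp (hherm.eigenvectorUnitary).2
    rw [hu, one_mul, Matrix.trace_diagonal]
    simp
  have hdet_eig : P.det = ∏ i, hherm.eigenvalues i := by
    have := hherm.det_eq_prod_eigenvalues
    simpa using this
  have heig_nonneg : ∀ i, 0 ≤ hherm.eigenvalues i := fun i => hPsd.eigenvalues_nonneg i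
  -- AM-GM
  have hamgm : ∏ i, (hherm.eigenvalues i) ^ ((d:ℝ)⁻¹) ≤
      ∑ i, ((d:ℝ)⁻¹) * hherm.eigenvalues i := by
    refine Real.geom_mean_le_arith_mean_weighted univ _ _ (fun i _ => by positivity) ?_
      (fun i _ => heig_nonneg i)
    simp [Finset.card_univ]
    field_simp
  have hsum : ∑ i, ((d:ℝ)⁻¹) * hherm.eigenvalues i ≤ (d:ℝ) * M ^ 2 := by
    rw [← Finset.mul_sum, ← htr_eig]
    rw [inv_mul_le_iff₀ (by positivity : (0:ℝ) < (d:ℝ))]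
    linarith [htrace]
  have hprod_pow : (∏ i, (hherm.eigenvalues i) ^ ((d:ℝ)⁻¹)) ^ d = ∏ i, hherm.eigenvalues i := by
    rw [← Finset.prod_pow]
    refine Finset.prod_congr rfl fun i _ => ?_
    rw [← Real.rpow_natCast ((hherm.eigenvalues i) ^ ((d:ℝ)⁻¹)) d,
      ← Real.rpow_mul (heig_nonneg i)]
    rw [inv_mul_cancel₀ (by positivity : ((d:ℝ)) ≠ 0)]
    exact Real.rpow_one _
  calc C.det ^ 2 = ∏ i, hherm.eigenvalues i := by rw [← hdet, hdet_eig]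
    _ = (∏ i, (hherm.eigenvalues i) ^ ((d:ℝ)⁻¹)) ^ d := hprod_pow.symm
    _ ≤ ((d:ℝ) * M ^ 2) ^ d := by
        exact pow_le_pow_left₀ (Finset.prod_nonneg fun i _ =>
          Real.rpow_nonneg (heig_nonneg i) _) (hamgm.trans hsum) d

lemma log3_bounds : 1.0946 < Real.log 3 ∧ Real.log 3 < 1.1051 := by
  have h4 : Real.log (4/3) = 2 * Real.log 2 - Real.log 3 := by
    rw [show (4:ℝ)/3 = 4/3 by norm_num, Real.log_div (by norm_num) (by norm_num)]
    rw [show (4:ℝ) = 2^2 by norm_num, Real.log_pow]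
    push_cast; ring
  have hser := Real.abs_log_sub_add_sum_range_le (x := (1/4:ℝ)) (by rw [abs_of_pos]; norm_num; norm_num) 3
  have hsum : ∑ i ∈ range 3, ((1:ℝ)/4) ^ (i + 1) / (↑i + 1) = 55/192 := by
    simp [Finset.sum_range_succ]
    norm_num
  have h34 : Real.log (1 - 1/4) = - Real.log (4/3) := by
    rw [show (1:ℝ) - 1/4 = 3/4 by norm_num]
    rw [show (3:ℝ)/4 = (4/3)⁻¹ by norm_num, Real.log_inv]
  rw [hsum, h34] at hser
  have habs : |(1:ℝ)/4| ^ (3+1) / (1 - |(1:ℝ)/4|) = 1/192 := by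
    rw [abs_of_pos (by norm_num : (0:ℝ) < 1/4)]
    norm_num
  rw [habs] at hser
  rw [abs_le] at hser
  have hl2a := Real.log_two_gt_d9
  have hl2b := Real.log_two_lt_d9
  constructor <;> nlinarith [hser.1, hser.2]

lemma pointwise_log (x : ℝ) (hx : 3 ≤ x) :
    Real.log (x+1) / x ≤ (1/2) * ((Real.log (x+1))^2 - (Real.log x)^2)
      + 2 * ((Real.log x + 1)/x - (Real.log (x+1) + 1)/(x+1)) := by
  have hx0 : (0:ℝ) < x := by linarith
  have hx1 : (0:ℝ) < x + 1 := by linarith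
  set b := Real.log x with hb
  set a := Real.log (x+1) with ha
  have hδ : a - b = Real.log ((x+1)/x) := by rw [Real.log_div (by positivity) (ne_of_gt hx0)]
  have hδ1 : a - b ≤ 1/x := by
    rw [hδ]
    have := Real.log_le_sub_one_of_pos (show (0:ℝ) < (x+1)/x by positivity)
    have hxx : (x+1)/x - 1 = 1/x := by field_simp; ring
    linarith
  have hδ2 : 1/(x+1) ≤ a - b := by
    have := Real.log_le_sub_one_of_pos (show (0:ℝ) < x/(x+1) by positivity)
    have h1 : Real.log (x/(x+1)) = -(a-b) := by
      rw [hδ, ← Real.log_inv]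
      congr 1
      field_simp
    have h2 : x/(x+1) - 1 = -(1/(x+1)) := by field_simp; ring
    rw [h1, h2] at this
    linarith
  have hb1 : 1 ≤ b := by
    rw [hb, show (1:ℝ) = Real.log (Real.exp 1) by rw [Real.log_exp]]
    apply Real.log_le_log (Real.exp_pos 1)
    have := Real.exp_one_lt_d9
    linarith
  have h1 : (a-b)*x ≤ 1 := by
    calc (a-b)*x ≤ (1/x)*x := mul_le_mul_of_nonneg_right hδ1 (le_of_lt hx0)
      _ = 1 := by field_simp
  have h2 : (a-b)*(x+1) ≥ 1 := by
    calc (a-b)*(x+1) ≥ (1/(x+1))*(x+1) := mul_le_mul_of_nonneg_right hδ2 (le_of_lt hx1)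
      _ ≥ 1 := by rw [one_div_mul_cancel (ne_of_gt hx1)]
  have hab : b ≤ a := by nlinarith
  have expand : (1/2) * (a^2 - b^2) + 2 * ((b + 1)/x - (a + 1)/(x+1)) - a/x
      = ((a+b)*(a-b)*x*(x+1) + 4*((b+1)*(x+1) - (a+1)*x) - 2*a*(x+1)) / (2*x*(x+1)) := by
    field_simp
    ring
  have hnum : (a+b)*(a-b)*x*(x+1) + 4*((b+1)*(x+1) - (a+1)*x) - 2*a*(x+1) ≥ 0 := by
    have e1 : (b+1)*(x+1) - (a+1)*x = b + 1 - (a-b)*x := by ring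
    have f3 : (a+b)*((a-b)*(x+1))*x ≥ (a+b)*1*x := by
      have hc : 0 ≤ (a+b)*x := by nlinarith
      nlinarith
    nlinarith [h1, h2, hb1, hab, hx]
  have final : (1/2) * (a^2 - b^2) + 2 * ((b + 1)/x - (a + 1)/(x+1)) - a/x ≥ 0 := by
    rw [expand]
    exact div_nonneg hnum (by positivity)
  linarith

noncomputable def C₀ : ℝ := Real.log 2 + Real.log 3 / 2 - (1/2)*(Real.log 3)^2
  + (2/3)*(Real.log 3 + 1)

lemma sumb : ∀ k : ℕ, 2 ≤ k → ∑ N ∈ Icc 1 k, Real.log ((N:ℝ)+1)/(N:ℝ)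
    ≤ (1/2)*(Real.log ((k:ℝ)+1))^2 + C₀ - 2*(Real.log ((k:ℝ)+1)+1)/((k:ℝ)+1) := by
  intro k hk
  induction k, hk using Nat.le_induction with
  | base =>
    have : (Icc 1 2 : Finset ℕ) = {1, 2} := rfl
    rw [this]
    rw [Finset.sum_insert (by decide), Finset.sum_singleton]
    unfold C₀
    norm_num
    ring_nf
    norm_num [show ((2:ℕ):ℝ) = 2 from rfl]
  | succ k hk ih =>
    rw [Finset.sum_Icc_succ_top (by omega : 1 ≤ k + 1)]
    have hx : (3:ℝ) ≤ ((k:ℝ)+1) := by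
      have : (2:ℝ) ≤ (k:ℝ) := by exact_mod_cast hk
      linarith
    have hp := pointwise_log ((k:ℝ)+1) hx
    push_cast
    linarith [ih, hp, (by ring : 2*((Real.log ((k:ℝ)+1)+1)/((k:ℝ)+1) - (Real.log ((k:ℝ)+1+1)+1)/((k:ℝ)+1+1)) = 2*(Real.log ((k:ℝ)+1)+1)/((k:ℝ)+1) - 2*(Real.log ((k:ℝ)+1+1)+1)/((k:ℝ)+1+1))]




lemma numeric (k : ℕ) (hk : 3 ≤ k) :
    Real.log ((k:ℝ)+1) + ∑ N ∈ Icc 1 k, Real.log ((N:ℝ)+1)/(N:ℝ)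
      ≤ 4*Real.log 2 + Real.log k + (1/2)*(Real.log k)^2 := by
  have l2a := Real.log_two_gt_d9
  have l2b := Real.log_two_lt_d9
  obtain ⟨l3a, l3b⟩ := log3_bounds
  rcases eq_or_lt_of_le hk with hk3 | hk4
  · -- k = 3
    subst hk3
    have : (Icc 1 3 : Finset ℕ) = {1, 2, 3} := rfl
    rw [this, Finset.sum_insert (by decide), Finset.sum_insert (by decide),
      Finset.sum_singleton]
    have h4 : Real.log ((3:ℕ):ℝ) = Real.log 3 := by norm_num
    have h42 : Real.log ((3:ℝ)+1) = 2*Real.log 2 := by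
      rw [show (3:ℝ)+1 = 2^2 by norm_num, Real.log_pow]; push_cast; ring
    have h1 : Real.log ((1:ℕ):ℝ) = 0 := by norm_num
    push_cast
    rw [h42]
    have h2 : Real.log (1+1:ℝ) = Real.log 2 := by norm_num
    have h3 : Real.log (2+1:ℝ) = Real.log 3 := by norm_num
    have h44 : Real.log (3+1:ℝ) = 2*Real.log 2 := by rw [show (3:ℝ)+1 = 2^2 by norm_num, Real.log_pow]; push_cast; ring
    nlinarith [sq_nonneg (Real.log 3)]
  · -- k ≥ 4
    have hk4' : 4 ≤ k := hk4
    have hkr : (4:ℝ) ≤ (k:ℝ) := by exact_mod_cast hk4'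
    have hkpos : (0:ℝ) < (k:ℝ) := by linarith
    set a := Real.log ((k:ℝ)+1) with ha
    set b := Real.log (k:ℝ) with hb
    have hsum := sumb k (by omega)
    -- δ bounds
    have hδpos : b ≤ a := Real.log_le_log (by linarith) (by linarith)
    have hδ : a - b ≤ 1/(k:ℝ) := by
      have h1 : a - b = Real.log (((k:ℝ)+1)/(k:ℝ)) := by
        rw [ha, hb, Real.log_div (by linarith) (ne_of_gt hkpos)]
      have h2 := Real.log_le_sub_one_of_pos (show (0:ℝ) < ((k:ℝ)+1)/(k:ℝ) by positivity)
      rw [h1]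
      have h3 : ((k:ℝ)+1)/(k:ℝ) - 1 = 1/(k:ℝ) := by field_simp; ring
      linarith
    -- a ≤ (k+1)/e ≤ 0.3679 (k+1)
    have hae : a ≤ 0.3679 * ((k:ℝ)+1) := by
      have he := Real.exp_one_gt_d9
      have hepos := Real.exp_pos 1
      have h1 : Real.log (((k:ℝ)+1)/Real.exp 1) = a - 1 := by
        rw [Real.log_div (by linarith) (ne_of_gt hepos), Real.log_exp]
      have h2 := Real.log_le_sub_one_of_pos (show (0:ℝ) < ((k:ℝ)+1)/Real.exp 1 by positivity)
      rw [h1] at h2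
      have h3 : ((k:ℝ)+1)/Real.exp 1 ≤ 0.3679 * ((k:ℝ)+1) := by
        rw [div_le_iff₀ hepos]
        nlinarith
      linarith
    -- C₀ bound
    have hC : 4*Real.log 2 - C₀ ≥ 0.7225 := by
      unfold C₀
      nlinarith [sq_nonneg (Real.log 3 - 1.0946)]
    -- assemble
    have hb1 : 0 < b := by
      rw [hb]
      apply Real.log_pos; linarith
    have hapos : 0 < a := by rw [ha]; apply Real.log_pos; linarith
    have step1 : (1/2)*(a^2 - b^2) ≤ a * (a - b) := by nlinarith
    have step2a : a * (a - b) ≤ a * (1/(k:ℝ)) := mul_le_mul_of_nonneg_left hδ (le_of_lt hapos)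
    have step2 : (a - b) + a * (a-b) ≤ (1 + a) * (1/(k:ℝ)) := by
      have : (1 + a) * (1/(k:ℝ)) = 1/(k:ℝ) + a * (1/(k:ℝ)) := by ring
      linarith
    have step3 : (1 + a) * (1/(k:ℝ)) ≤ 0.7225 := by
      rw [mul_one_div, div_le_iff₀ hkpos]
      linarith
    have htail : 0 ≤ 2*(a+1)/((k:ℝ)+1) := div_nonneg (by linarith) (by linarith)
    linarith

lemma reidx (k : ℕ) (g : ℕ → ℝ) :
    ∑ r ∈ range k, g (k - r) = ∑ N ∈ Icc 1 k, g N := by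
  have h1 : ∑ j ∈ range k, g (j + 1) = ∑ r ∈ range k, g (k - r) := by
    rw [← Finset.sum_range_reflect (fun r => g (k - r)) k]
    refine Finset.sum_congr rfl fun j hj => ?_
    rw [Finset.mem_range] at hj
    congr 1
    omega
  rw [← h1]
  rw [show Icc 1 k = Ico 1 (k+1) by rfl]
  rw [Finset.sum_Ico_eq_sum_range]
  simp [add_comm]
lemma partial_w (k : ℕ) (hk : 0 < k) (w : ℕ → ℝ)
    (hw0 : w 0 = ((k:ℝ))⁻¹)
    (hw : ∀ r, r ≠ 0 → w r = (((k-r:ℕ)):ℝ)⁻¹ * (((k-r+1:ℕ)):ℝ)⁻¹) :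
    ∀ i, i < k → ∑ r ∈ range (i+1), w r = (((k-i:ℕ)):ℝ)⁻¹ := by
  intro i
  induction i with
  | zero => intro _; simpa using hw0
  | succ i ih =>
    intro hik
    rw [Finset.sum_range_succ, ih (by omega)]
    rw [hw (i+1) (by omega)]
    have hc : (1:ℕ) ≤ k - (i+1) := by omega
    have hcc : (k - i : ℕ) = (k - (i+1)) + 1 := by omega
    set c := (k - (i+1) : ℕ)
    rw [hcc]
    have hc0 : ((c:ℝ)) ≠ 0 := by
      have : (1:ℝ) ≤ (c:ℝ) := by exact_mod_cast hc
      linarith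
    have hc1 : ((c:ℝ)) + 1 ≠ 0 := by positivity
    push_cast
    field_simp

lemma comb (k : ℕ) (hk : 3 ≤ k) (y : ℕ → ℝ) (z L : ℝ)
    (hrel : ∀ r, r < k → 2*(z + ∑ i ∈ Ico r k, y i) ≤
      (((k - r + 1 : ℕ)):ℝ) * (Real.log (((k - r + 1 : ℕ)):ℝ) + 2*(y r + L))) :
    z ≤ y 0 + L * (1 + ∑ N ∈ Icc 1 k, ((N:ℝ))⁻¹)
      + (1/2) * (Real.log ((k:ℝ)+1) + ∑ N ∈ Icc 1 k, Real.log ((N:ℝ)+1)/(N:ℝ)) := by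
  classical
  have hk0 : 0 < k := by omega
  set w : ℕ → ℝ := fun r =>
    if r = 0 then ((k:ℝ))⁻¹ else (((k-r:ℕ)):ℝ)⁻¹ * (((k-r+1:ℕ)):ℝ)⁻¹ with hwdef
  have hw0 : w 0 = ((k:ℝ))⁻¹ := by simp [hwdef]
  have hwr : ∀ r, r ≠ 0 → w r = (((k-r:ℕ)):ℝ)⁻¹ * (((k-r+1:ℕ)):ℝ)⁻¹ := by
    intro r hr; simp [hwdef, hr]
  have hpart := partial_w k hk0 w hw0 hwr
  have hw_nonneg : ∀ r, 0 ≤ w r := by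
    intro r
    by_cases hr : r = 0
    · subst hr; rw [hw0]; positivity
    · rw [hwr r hr]; positivity
  -- the summed inequality
  have hsummed : ∑ r ∈ range k, w r * (2*(z + ∑ i ∈ Ico r k, y i)) ≤
      ∑ r ∈ range k, w r * ((((k - r + 1 : ℕ)):ℝ) * (Real.log (((k - r + 1 : ℕ)):ℝ) + 2*(y r + L))) := by
    refine Finset.sum_le_sum fun r hr => ?_
    exact mul_le_mul_of_nonneg_left (hrel r (Finset.mem_range.mp hr)) (hw_nonneg r)
  -- evaluate LHS
  have htot : ∑ r ∈ range k, w r = 1 := by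
    have := hpart (k-1) (by omega)
    rw [show (k-1)+1 = k by omega] at this
    rw [this, show (k - (k-1) : ℕ) = 1 by omega]
    norm_num
  have hswap : ∑ r ∈ range k, w r * (∑ i ∈ Ico r k, y i)
      = ∑ i ∈ range k, (((k-i:ℕ)):ℝ)⁻¹ * y i := by
    have e1 : ∀ r, Ico r k = (range k).filter (fun i => r ≤ i) := by
      intro r; ext x; simp [Finset.mem_Ico, Finset.mem_filter, Finset.mem_range]; omega
    calc ∑ r ∈ range k, w r * (∑ i ∈ Ico r k, y i)
        = ∑ r ∈ range k, ∑ i ∈ range k, (if r ≤ i then w r * y i else 0) := by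
          refine Finset.sum_congr rfl fun r _ => ?_
          rw [Finset.mul_sum, e1 r, Finset.sum_filter]
      _ = ∑ i ∈ range k, ∑ r ∈ range k, (if r ≤ i then w r * y i else 0) :=
          Finset.sum_comm
      _ = ∑ i ∈ range k, (((k-i:ℕ)):ℝ)⁻¹ * y i := by
          refine Finset.sum_congr rfl fun i hi => ?_
          rw [Finset.mem_range] at hi
          have e2 : (range k).filter (fun r => r ≤ i) = range (i+1) := by
            ext x; simp [Finset.mem_filter, Finset.mem_range]; omega
          rw [← Finset.sum_filter, e2]
          rw [← Finset.sum_mul, hpart i hi]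
  -- evaluate RHS pointwise
  have hpoint : ∀ r, r < k →
      w r * ((((k - r + 1 : ℕ)):ℝ) * (Real.log (((k - r + 1 : ℕ)):ℝ) + 2*(y r + L)))
      = (if r = 0 then Real.log ((k:ℝ)+1) + 2*(y 0 + L) else 0)
        + (((k-r:ℕ)):ℝ)⁻¹ * (Real.log (((k-r:ℕ):ℝ)+1) + 2*(y r + L)) := by
    intro r hr
    have hcast : (((k - r + 1 : ℕ)):ℝ) = ((k-r:ℕ):ℝ) + 1 := by push_cast; ring
    by_cases hr0 : r = 0
    · subst hr0
      rw [hw0, if_pos rfl]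
      have h1 : ((k - 0 : ℕ)) = k := by omega
      rw [h1] at hcast ⊢
      rw [hcast]
      have hkne : ((k:ℝ)) ≠ 0 := by positivity
      field_simp
    · rw [hwr r hr0, if_neg hr0, hcast]
      have h2 : (1:ℕ) ≤ k - r := by omega
      have h2r : ((k-r:ℕ):ℝ) ≠ 0 := by
        have : (1:ℝ) ≤ ((k-r:ℕ):ℝ) := by exact_mod_cast h2
        linarith
      have h3 : ((k-r:ℕ):ℝ) + 1 ≠ 0 := by positivity
      field_simp
      ring
  have hRHS : ∑ r ∈ range k, w r * ((((k - r + 1 : ℕ)):ℝ) * (Real.log (((k - r + 1 : ℕ)):ℝ) + 2*(y r + L)))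
      = (Real.log ((k:ℝ)+1) + 2*(y 0 + L))
        + (∑ r ∈ range k, (((k-r:ℕ)):ℝ)⁻¹ * Real.log (((k-r:ℕ):ℝ)+1)
           + 2 * ∑ r ∈ range k, (((k-r:ℕ)):ℝ)⁻¹ * y r
           + 2 * L * ∑ r ∈ range k, (((k-r:ℕ)):ℝ)⁻¹) := by
    rw [Finset.sum_congr rfl (fun r hr => hpoint r (Finset.mem_range.mp hr))]
    rw [Finset.sum_add_distrib]
    rw [Finset.sum_ite_eq' (range k) 0 (fun _ => Real.log ((k:ℝ)+1) + 2*(y 0 + L))]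
    rw [if_pos (Finset.mem_range.mpr hk0)]
    congr 1
    rw [Finset.mul_sum, Finset.mul_sum, ← Finset.sum_add_distrib, ← Finset.sum_add_distrib]
    refine Finset.sum_congr rfl fun r _ => by ring
  -- reindex the two pure sums
  have hr1 : ∑ r ∈ range k, (((k-r:ℕ)):ℝ)⁻¹ * Real.log (((k-r:ℕ):ℝ)+1)
      = ∑ N ∈ Icc 1 k, Real.log ((N:ℝ)+1)/(N:ℝ) := by
    rw [reidx k (fun N => ((N:ℝ))⁻¹ * Real.log ((N:ℝ)+1))]
    refine Finset.sum_congr rfl fun N _ => ?_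
    rw [div_eq_inv_mul]
  have hr2 : ∑ r ∈ range k, (((k-r:ℕ)):ℝ)⁻¹ = ∑ N ∈ Icc 1 k, ((N:ℝ))⁻¹ :=
    reidx k (fun N => ((N:ℝ))⁻¹)
  -- put together
  have hLHS : ∑ r ∈ range k, w r * (2*(z + ∑ i ∈ Ico r k, y i))
      = 2*z + 2*∑ i ∈ range k, (((k-i:ℕ)):ℝ)⁻¹ * y i := by
    calc ∑ r ∈ range k, w r * (2*(z + ∑ i ∈ Ico r k, y i))
        = ∑ r ∈ range k, (2*z*(w r) + 2*(w r * (∑ i ∈ Ico r k, y i))) := by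
          refine Finset.sum_congr rfl fun r _ => by ring
      _ = 2*z*(∑ r ∈ range k, w r) + 2*(∑ r ∈ range k, w r * (∑ i ∈ Ico r k, y i)) := by
          rw [Finset.sum_add_distrib, ← Finset.mul_sum, ← Finset.mul_sum]
      _ = 2*z + 2*∑ i ∈ range k, (((k-i:ℕ)):ℝ)⁻¹ * y i := by
          rw [htot, hswap]; ring
  rw [hLHS] at hsummed
  rw [hRHS, hr1, hr2] at hsummed
  linarith

/-- **Example 1 (common pivot quality).** If all pivot qualities equal a common value
`β ∈ (0,1]`, then `ρ_k(A) ≤ 4 β^{-2-H_{k-2}} √k k^{(1/4) log k}`, where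
`H_j = ∑_{i=1}^j 1/i` is the `j`-th harmonic number. -/
theorem ge_growth_common_pivot_quality
    (m n k : ℕ) (A : Matrix (Fin m) (Fin n) ℝ) (hA : A ≠ 0)
    (hk : 3 ≤ k) (hkmn : k ≤ min m n)
    (piv : ℕ → Fin m × Fin n)
    (hpiv : ∀ r < k, geIter A piv r (piv r).1 (piv r).2 ≠ 0)
    (β : ℝ) (hβpos : 0 < β) (hβle : β ≤ 1)
    (hβdef : ∀ r, 1 ≤ r → r ≤ k →
      β = pivMag A piv r / maxAbs (geIter A piv (r - 1))) :
    maxAbs (geIter A piv k) / maxAbs A ≤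
      4 * β ^ (-(2 + ∑ i ∈ Finset.Icc 1 (k - 2), ((i : ℝ))⁻¹)) *
        Real.sqrt k * (k : ℝ) ^ ((1 / 4 : ℝ) * Real.log k) := by
  
  have hkm : k ≤ m := le_trans hkmn (min_le_left _ _)
  have hkn : k ≤ n := le_trans hkmn (min_le_right _ _)
  have hm : 0 < m := by omega
  have hn : 0 < n := by omega
  set S : ℝ := ∑ i ∈ Finset.Icc 1 (k - 2), ((i : ℝ))⁻¹ with hS
  set G := geIter A piv with hG
  set p : ℕ → ℝ := fun r => |G r (piv r).1 (piv r).2| with hpdef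
  set Mx : ℕ → ℝ := fun r => maxAbs (G r) with hMxdef
  have hle : ∀ r s t, |G r s t| ≤ Mx r := fun r => le_maxAbs (G r)
  have hppos : ∀ r, r < k → 0 < p r := fun r hr => abs_pos.mpr (hpiv r hr)
  have hMpos : ∀ r, r < k → 0 < Mx r := fun r hr => lt_of_lt_of_le (hppos r hr) (hle r _ _)
  have hM0 : 0 < Mx 0 := hMpos 0 (by omega)
  have hpM : ∀ r, r < k → p r = β * Mx r := by
    intro r hr
    have h := hβdef (r+1) (by omega) (by omega)
    have h2 : (r+1) - 1 = r := rfl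
    rw [h2] at h
    have h3 : pivMag A piv (r+1) = p r := rfl
    have h4 : maxAbs (geIter A piv r) = Mx r := rfl
    rw [h3, h4] at h
    rw [h]
    exact (div_mul_cancel₀ _ (ne_of_gt (hMpos r hr))).symm
  set L : ℝ := - Real.log β with hL
  have hLnn : 0 ≤ L := by
    rw [hL]
    have := Real.log_nonpos (le_of_lt hβpos) hβle
    linarith
  have hlogM : ∀ r, r < k → Real.log (Mx r) = Real.log (p r) + L := by
    intro r hr
    have := hpM r hr
    rw [this, Real.log_mul (ne_of_gt hβpos) (ne_of_gt (hMpos r hr)), hL]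
    ring
  -- right-hand side positivity
  set RHS : ℝ := 4 * β ^ (-(2 + S)) * Real.sqrt k * (k : ℝ) ^ ((1 / 4 : ℝ) * Real.log k)
    with hRHSdef
  have hkR : (0:ℝ) < (k:ℝ) := by
    have : (3:ℝ) ≤ (k:ℝ) := by exact_mod_cast hk
    linarith
  have hRHSpos : 0 < RHS := by
    rw [hRHSdef]
    have h1 : (0:ℝ) < β ^ (-(2 + S)) := Real.rpow_pos_of_pos hβpos _
    have h2 : (0:ℝ) < Real.sqrt k := Real.sqrt_pos.mpr hkR
    have h3 : (0:ℝ) < (k : ℝ) ^ ((1 / 4 : ℝ) * Real.log k) := Real.rpow_pos_of_pos hkR _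
    positivity
  show Mx k / Mx 0 ≤ RHS
  rcases le_or_gt (Mx k) 0 with hMk | hMk
  · have h0 : 0 ≤ Mx k := le_trans (abs_nonneg _) (hle k ⟨0, hm⟩ ⟨0, hn⟩)
    have : Mx k = 0 := le_antisymm hMk h0
    rw [this, zero_div]
    exact le_of_lt hRHSpos
  -- main case
  obtain ⟨sM, tM, hst⟩ := maxAbs_exists hm hn (G k)
  have hMk' : 0 < |G k sM tM| := by rw [← hst]; exact hMk
  have hGk_ne : G k sM tM ≠ 0 := by
    intro h
    rw [h, abs_zero] at hMk'
    exact lt_irrefl _ hMk'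
  -- the key relations
  have hrel : ∀ r, r < k → 2*(Real.log (Mx k) + ∑ i ∈ Ico r k, Real.log (p i)) ≤
      (((k - r + 1 : ℕ)):ℝ) * (Real.log (((k - r + 1 : ℕ)):ℝ) + 2*(Real.log (p r) + L)) := by
    intro r hr
    set d : ℕ := k - r + 1 with hd
    set q : ℕ → Fin m × Fin n := fun i => if r + i < k then piv (r+i) else (sM, tM) with hq
    have hclaim : ∀ i, i ≤ k - r → geIter (G r) q i = G (r+i) := by
      intro i
      induction i with
      | zero => intro _; rfl
      | succ i ih =>
        intro hik
        have hik' : i < k - r := by omega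
        have hrik : r + i < k := by omega
        show geStep (geIter (G r) q i) (q i).1 (q i).2 = _
        rw [ih (by omega)]
        rw [hq]
        simp only [if_pos hrik]
        have : G (r + (i+1)) = geStep (G (r+i)) (piv (r+i)).1 (piv (r+i)).2 := by
          rw [show r + (i+1) = (r+i) + 1 by ring]
          rfl
        rw [this]
    have hqne : ∀ i, i < d → geIter (G r) q i (q i).1 (q i).2 ≠ 0 := by
      intro i hid
      rcases lt_or_ge i (k - r) with hikr | hikr
      · have hrik : r + i < k := by omega
        rw [hclaim i (le_of_lt hikr), hq]
        simp only [if_pos hrik]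
        exact hpiv (r+i) hrik
      · have hieq : i = k - r := by omega
        subst hieq
        have hrik : ¬ (r + (k - r) < k) := by omega
        rw [hclaim (k-r) (le_refl _), hq]
        simp only [if_neg hrik]
        rw [show r + (k - r) = k by omega]
        exact hGk_ne
    have hdet := det_iter d (G r) q hqne
    -- evaluate the product
    have hprod : ∏ i ∈ range d, |geIter (G r) q i (q i).1 (q i).2|
        = (∏ i ∈ Ico r k, p i) * Mx k := by
      rw [hd, Finset.prod_range_succ]
      congr 1
      · rw [Finset.prod_Ico_eq_prod_range]
        refine Finset.prod_congr rfl fun i hi => ?_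
        rw [Finset.mem_range] at hi
        have hrik : r + i < k := by omega
        rw [hclaim i (le_of_lt hi), hq]
        simp only [if_pos hrik]
        rfl
      · have hrik : ¬ (r + (k - r) < k) := by omega
        rw [hclaim (k-r) (le_refl _), hq]
        simp only [if_neg hrik]
        rw [show r + (k - r) = k by omega]
        exact hst.symm
    have hHad := hadamard_sq ((G r).submatrix (fun i : Fin d => (q i.val).1)
        (fun i : Fin d => (q i.val).2)) (Mx r) (fun i j => hle r _ _)
    have hsq : ((∏ i ∈ Ico r k, p i) * Mx k)^2 ≤ ((d:ℝ) * (Mx r)^2)^d := by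
      rw [← hprod, ← hdet, sq_abs]
      exact hHad
    -- take logs
    have hQpos : 0 < (∏ i ∈ Ico r k, p i) * Mx k := by
      apply mul_pos _ hMk
      apply Finset.prod_pos
      intro i hi
      rw [Finset.mem_Ico] at hi
      exact hppos i hi.2
    have hdR : (0:ℝ) < (d:ℝ) := by positivity
    have hMrpos := hMpos r hr
    have hlog := Real.log_le_log (by positivity) hsq
    rw [Real.log_pow, Real.log_pow] at hlog
    rw [Real.log_mul (ne_of_gt (Finset.prod_pos (fun i hi => hppos i (Finset.mem_Ico.mp hi).2))) (ne_of_gt hMk)] at hlog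
    rw [Real.log_prod (fun i hi => ne_of_gt (hppos i (Finset.mem_Ico.mp hi).2))] at hlog
    rw [Real.log_mul (ne_of_gt hdR) (by positivity), Real.log_pow] at hlog
    rw [hlogM r hr] at hlog
    push_cast at hlog ⊢
    nlinarith [hlog]
  -- apply the combination lemma
  have hcomb := comb k hk (fun r => Real.log (p r)) (Real.log (Mx k)) L hrel
  have hnum := numeric k hk
  -- harmonic sum split
  have hsplit : ∑ N ∈ Icc 1 k, ((N:ℝ))⁻¹ = S + (((k-1:ℕ)):ℝ)⁻¹ + ((k:ℝ))⁻¹ := by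
    have e1 : (Icc 1 k : Finset ℕ) = Icc 1 ((k-1)+1) := by congr 1; omega
    rw [e1, Finset.sum_Icc_succ_top (by omega)]
    have e2 : (Icc 1 (k-1) : Finset ℕ) = Icc 1 ((k-2)+1) := by congr 1; omega
    rw [e2, Finset.sum_Icc_succ_top (by omega)]
    rw [hS]
    rw [show ((k-2)+1 : ℕ) = k-1 by omega, show ((k-1)+1 : ℕ) = k by omega]
  have hHbound : ∑ N ∈ Icc 1 k, ((N:ℝ))⁻¹ ≤ S + 2 := by
    rw [hsplit]
    have h1 : (((k-1:ℕ)):ℝ)⁻¹ ≤ 1 := by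
      rw [inv_le_one_iff₀]
      right
      have : (1:ℕ) ≤ k-1 := by omega
      exact_mod_cast this
    have h2 : ((k:ℝ))⁻¹ ≤ 1 := by
      rw [inv_le_one_iff₀]; right; exact_mod_cast (by omega : 1 ≤ k)
    linarith
  -- conclude the log inequality
  have hlogMx0 : Real.log (Mx 0) = Real.log (p 0) + L := hlogM 0 (by omega)
  have hlogfinal : Real.log (Mx k) - Real.log (Mx 0) ≤
      2*Real.log 2 + (2 + S)*L + (1/2)*Real.log k + (1/4)*(Real.log k)^2 := by
    have hLH : L * (1 + ∑ N ∈ Icc 1 k, ((N:ℝ))⁻¹) ≤ L * (1 + (S + 2)) :=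
      mul_le_mul_of_nonneg_left (by linarith) hLnn
    have hnum' : (1/2) * (Real.log ((k:ℝ)+1) + ∑ N ∈ Icc 1 k, Real.log ((N:ℝ)+1)/(N:ℝ))
        ≤ 2*Real.log 2 + (1/2)*Real.log k + (1/4)*(Real.log k)^2 := by
      nlinarith [hnum]
    rw [hlogMx0]
    nlinarith [hcomb, hLH, hnum']
  -- compute log RHS
  have hlogRHS : Real.log RHS = 2*Real.log 2 + (2 + S)*L + (1/2)*Real.log k
      + (1/4)*(Real.log k)^2 := by
    rw [hRHSdef]
    rw [Real.log_mul (by positivity) (ne_of_gt (Real.rpow_pos_of_pos hkR _))]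
    rw [Real.log_mul (by positivity) (ne_of_gt (Real.sqrt_pos.mpr hkR))]
    rw [Real.log_mul (by norm_num) (ne_of_gt (Real.rpow_pos_of_pos hβpos _))]
    rw [Real.log_rpow hβpos, Real.log_rpow hkR, Real.log_sqrt (le_of_lt hkR)]
    rw [show (4:ℝ) = 2^2 by norm_num, Real.log_pow]
    push_cast
    rw [hL]
    ring
  -- finish
  have hfrac : Real.log (Mx k / Mx 0) ≤ Real.log RHS := by
    rw [Real.log_div (ne_of_gt hMk) (ne_of_gt hM0), hlogRHS]
    exact hlogfinal
  calc Mx k / Mx 0 = Real.exp (Real.log (Mx k / Mx 0)) :=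
        (Real.exp_log (div_pos hMk hM0)).symm
    _ ≤ Real.exp (Real.log RHS) := Real.exp_le_exp.mpr hfrac
    _ = RHS := Real.exp_log hRHSpos
end

section
/- Let A be an m×n real matrix on which k GE steps are performed with pivot positions (i_1,j_1),…,(i_k,j_k), where i_1,…,i_k are distinct rows and j_1,…,j_k are distinct columns. For 0 ≤ r ≤ k−1 let B^{(r)} be the (k−r)×(k−r) matrix with entries (B^{(r)})_{st} = A^{(r)}_{i_s j_t} for r+1 ≤ s,t ≤ k, and let p_i = |A^{(i-1)}_{i_i j_i}| be the pivot magnitudes. Then the absolute value of the determinant of B^{(r)} equals the product of the remaining pivot magnitudes: |det(B^{(r)})| = ∏_{i=r+1}^{k} p_i, for every 0 ≤ r ≤ k−1. -/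
open Finset Real

lemma key_step {m n : ℕ} (A : Matrix (Fin m) (Fin n) ℝ) (piv : ℕ → Fin m × Fin n)
    (r d : ℕ) (hp : geIter A piv r (piv r).1 (piv r).2 ≠ 0)
    (M : Matrix (Fin (d+1)) (Fin (d+1)) ℝ)
    (hM : ∀ s t, M s t = geIter A piv r (piv (r + (s:ℕ))).1 (piv (r + (t:ℕ))).2) :
    M.det = geIter A piv r (piv r).1 (piv r).2 *
      (Matrix.of fun s t : Fin d =>
        geIter A piv (r+1) (piv (r + 1 + (s:ℕ))).1 (piv (r + 1 + (t:ℕ))).2).det := by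
  have e0 : M 0 0 = geIter A piv r (piv r).1 (piv r).2 := by simpa using hM 0 0
  set E : Matrix (Fin (d+1)) (Fin (d+1)) ℝ :=
    Matrix.of fun s t => if s = t then 1 else if t = 0 then - (M s 0 / M 0 0) else 0 with hE
  have hEdet : E.det = 1 := by
    rw [Matrix.det_of_lowerTriangular E]
    · apply Finset.prod_eq_one
      intro i _
      simp [hE]
    · intro i j hij
      have hij' : (i : Fin (d+1)) < j := hij
      have h1 : i ≠ j := ne_of_lt hij'
      have h2 : j ≠ 0 := Fin.pos_iff_ne_zero.mp (lt_of_le_of_lt (Fin.zero_le i) hij')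
      simp [hE, h1, h2]
  have hEM : (E * M) = Matrix.of fun s t : Fin (d+1) =>
      if s = 0 then M 0 t
      else geIter A piv (r+1) (piv (r + (s:ℕ))).1 (piv (r + (t:ℕ))).2 := by
    ext s t
    rw [Matrix.mul_apply]
    by_cases hs : s = 0
    · subst hs
      rw [Finset.sum_eq_single 0]
      · simp [hE]
      · intro b _ hb; simp [hE, Ne.symm hb, hb]
      · simp
    · rw [Finset.sum_eq_add_of_mem s 0 (Finset.mem_univ s) (Finset.mem_univ 0) hs ?_]
      · simp only [hE, Matrix.of_apply, if_pos rfl, if_neg hs, if_pos rfl, one_mul, if_neg hs,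
          if_true]
        have e2 : M s 0 = geIter A piv r (piv (r + (s:ℕ))).1 (piv r).2 := by simpa using hM s 0
        have e3 : M 0 t = geIter A piv r (piv r).1 (piv (r + (t:ℕ))).2 := by simpa using hM 0 t
        rw [hM s t, e2, e3, e0]
        simp only [geIter, geStep, Matrix.of_apply]
        ring
      · intro c _ hc
        obtain ⟨hc1, hc2⟩ := hc
        simp [hE, (Ne.symm hc1 : ¬ (s = c)), hc2]
  have hdetEM : (E * M).det = M.det := by rw [Matrix.det_mul, hEdet, one_mul]
  have hzero : ∀ b : Fin (d+1),
      geIter A piv (r+1) (piv (r + (b:ℕ))).1 (piv r).2 = 0 := by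
    intro b
    simp only [geIter, geStep, Matrix.of_apply]
    field_simp
    ring
  have hsub : ((Matrix.of fun s t : Fin (d+1) =>
        if s = 0 then M 0 t
        else geIter A piv (r+1) (piv (r + (s:ℕ))).1 (piv (r + (t:ℕ))).2).submatrix
      (Fin.succAbove 0) Fin.succ) = Matrix.of (fun s t : Fin d =>
        geIter A piv (r+1) (piv (r + 1 + (s:ℕ))).1 (piv (r + 1 + (t:ℕ))).2) := by
    ext s t
    simp only [Matrix.submatrix_apply, Matrix.of_apply, Fin.succAbove_zero,
      if_neg (Fin.succ_ne_zero s), Fin.val_succ]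
    have h1 : r + ((s:ℕ) + 1) = r + 1 + (s:ℕ) := by omega
    have h2 : r + ((t:ℕ) + 1) = r + 1 + (t:ℕ) := by omega
    rw [h1, h2]
  rw [← hdetEM, hEM]
  rw [Matrix.det_succ_column_zero]
  rw [Finset.sum_eq_single 0]
  · simp only [Fin.val_zero, pow_zero, one_mul, Matrix.of_apply, if_pos rfl, e0, if_true]
    rw [hsub]
  · intro b _ hb
    have hb0 := hzero b
    simp only [Matrix.of_apply, if_neg hb, Fin.val_zero, Nat.add_zero]
    rw [hb0]
    ring
  · simp

/-- **Determinant of the pivot submatrix.** Let `B^{(r)}` be the `(k-r) × (k-r)` matrix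
with entries `A^{(r)}_{i_s j_t}` for `r+1 ≤ s, t ≤ k` (here 0-indexed: rows
`piv r, …, piv (k-1)`). Then `|det B^{(r)}| = ∏_{i=r+1}^k p_i`, the product of the
remaining pivot magnitudes. -/
theorem det_pivot_submatrix_eq_prod_pivots
    (m n k : ℕ) (A : Matrix (Fin m) (Fin n) ℝ)
    (hk : 1 ≤ k)
    (piv : ℕ → Fin m × Fin n)
    (hpiv : ∀ r < k, geIter A piv r (piv r).1 (piv r).2 ≠ 0)
    (hrows : ∀ r < k, ∀ s < k, (piv r).1 = (piv s).1 → r = s)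
    (hcols : ∀ r < k, ∀ s < k, (piv r).2 = (piv s).2 → r = s) :
    ∀ r < k,
      |(Matrix.of fun s t : Fin (k - r) =>
          geIter A piv r (piv (r + (s : ℕ))).1 (piv (r + (t : ℕ))).2).det| =
        ∏ i ∈ Finset.Ico r k, |geIter A piv i (piv i).1 (piv i).2| := by
  suffices H : ∀ d r, r < k → k - r = d →
      |(Matrix.of fun s t : Fin (k - r) =>
          geIter A piv r (piv (r + (s : ℕ))).1 (piv (r + (t : ℕ))).2).det| =
        ∏ i ∈ Finset.Ico r k, |geIter A piv i (piv i).1 (piv i).2| by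
    intro r hr; exact H (k - r) r hr rfl
  intro d
  induction d with
  | zero => intro r hr h0; omega
  | succ d ih =>
    intro r hr hd
    set e : Fin (k - r) ≃ Fin (d + 1) := finCongr hd with he
    rw [← Matrix.det_reindex_self e (Matrix.of fun s t : Fin (k - r) =>
          geIter A piv r (piv (r + (s : ℕ))).1 (piv (r + (t : ℕ))).2)]
    have hM : ∀ s t : Fin (d+1),
        (Matrix.reindex e e (Matrix.of fun s t : Fin (k - r) =>
          geIter A piv r (piv (r + (s : ℕ))).1 (piv (r + (t : ℕ))).2)) s t =
        geIter A piv r (piv (r + (s:ℕ))).1 (piv (r + (t:ℕ))).2 := by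
      intro s t
      simp [he, finCongr, Matrix.reindex_apply]
    rw [key_step A piv r d (hpiv r hr) _ hM, abs_mul]
    rw [Finset.prod_eq_prod_Ico_succ_bot hr]
    congr 1
    rcases Nat.eq_zero_or_pos d with h0 | hpos
    · subst h0
      have hIco : Finset.Ico (r+1) k = ∅ := by
        rw [Finset.Ico_eq_empty_iff]; omega
      rw [hIco]
      simp [Matrix.det_fin_zero]
    · have hr1 : r + 1 < k := by omega
      have hd1 : k - (r + 1) = d := by omega
      have := ih (r + 1) hr1 hd1
      rw [← this]
      set e2 : Fin (k - (r+1)) ≃ Fin d := finCongr hd1 with he2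
      rw [← Matrix.det_reindex_self e2 (Matrix.of fun s t : Fin (k - (r+1)) =>
          geIter A piv (r+1) (piv (r + 1 + (s : ℕ))).1 (piv (r + 1 + (t : ℕ))).2)]
      congr 1
end

section
/- Let A be a nonzero m×n real matrix on which k GE steps are performed with pivot positions (i_1,j_1),…,(i_k,j_k) (distinct rows, distinct columns), pivot magnitudes p_1,…,p_k and pivot qualities β_1,…,β_k ∈ (0,1]. Then for every 0 ≤ r ≤ k−1, the product of the remaining pivot magnitudes satisfies ∏_{i=r+1}^{k} p_i ≤ ((k−r)^{1/2} · β_{r+1}^{-1} · p_{r+1})^{k−r}. -/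
open Finset Real

/- ========== Auxiliary lemmas ========== -/

lemma amgm_fin {d : ℕ} (hd : 0 < d) (f : Fin d → ℝ) (hf : ∀ i, 0 ≤ f i) :
    ∏ i, f i ≤ ((∑ i, f i) / d) ^ d := by
  have hd' : (0:ℝ) < d := by exact_mod_cast hd
  have h := Real.geom_mean_le_arith_mean_weighted (s := Finset.univ)
    (fun _ => (d:ℝ)⁻¹) f (fun i _ => by positivity)
    (by simp [Finset.card_univ]; field_simp) (fun i _ => hf i)
  have key : (∏ i, f i ^ ((d:ℝ)⁻¹)) ^ d = ∏ i, f i := by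
    rw [← Finset.prod_pow]
    refine Finset.prod_congr rfl fun i _ => ?_
    rw [← Real.rpow_natCast (f i ^ ((d:ℝ)⁻¹)) d, ← Real.rpow_mul (hf i),
      inv_mul_cancel₀ (ne_of_gt hd'), Real.rpow_one]
  calc ∏ i, f i = (∏ i, f i ^ ((d:ℝ)⁻¹)) ^ d := key.symm
    _ ≤ (∑ i, (d:ℝ)⁻¹ * f i) ^ d := by
        refine pow_le_pow_left₀ (Finset.prod_nonneg fun i _ => Real.rpow_nonneg (hf i) _) h d
    _ = ((∑ i, f i) / d) ^ d := by rw [← Finset.mul_sum]; ring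

/-- **Hadamard-type bound**: if all entries of a `d × d` real matrix are bounded by `M`
in absolute value then `|det C| ≤ (√d · M)^d`. -/
lemma hadamard_bound {d : ℕ} (C : Matrix (Fin d) (Fin d) ℝ) {M : ℝ} (hM : 0 ≤ M)
    (h : ∀ a b, |C a b| ≤ M) : |C.det| ≤ (Real.sqrt d * M) ^ d := by
  rcases Nat.eq_zero_or_pos d with hd | hd
  · subst hd; simp [Matrix.det_fin_zero]
  have hd' : (0:ℝ) < d := by exact_mod_cast hd
  have hP := Matrix.posSemidef_conjTranspose_mul_self C
  have hH := hP.1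
  have hdet : C.det * C.det = ∏ i, hH.eigenvalues i := by
    simpa using hH.det_eq_prod_eigenvalues
  have htr : (C.conjTranspose * C).trace = ∑ i, hH.eigenvalues i := by
    conv_lhs => rw [hH.spectral_theorem]
    rw [Unitary.conjStarAlgAut_apply, Matrix.trace_mul_comm, ← Matrix.mul_assoc]
    have hu : (star (Matrix.IsHermitian.eigenvectorUnitary hH : Matrix (Fin d) (Fin d) ℝ)) *
        (Matrix.IsHermitian.eigenvectorUnitary hH : Matrix (Fin d) (Fin d) ℝ) = 1 :=
      Unitary.coe_star_mul_self _
    rw [hu, Matrix.one_mul, Matrix.trace_diagonal]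
    simp
  have htr_le : (C.conjTranspose * C).trace ≤ d * (d * M ^ 2) := by
    rw [Matrix.trace]
    have key : ∀ i : Fin d, (C.conjTranspose * C).diag i ≤ d * M ^ 2 := by
      intro i
      have hdiag : (C.conjTranspose * C).diag i = ∑ a, C a i * C a i := by
        simp [Matrix.diag, Matrix.mul_apply, Matrix.conjTranspose_apply]
      rw [hdiag]
      calc ∑ a, C a i * C a i ≤ ∑ _a : Fin d, M ^ 2 := by
            refine Finset.sum_le_sum fun a _ => ?_
            have := h a i
            nlinarith [abs_nonneg (C a i), sq_abs (C a i)]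
        _ = d * M ^ 2 := by simp [mul_comm]
    calc ∑ i, (C.conjTranspose * C).diag i ≤ ∑ _i : Fin d, ((d:ℝ) * M ^ 2) :=
          Finset.sum_le_sum fun i _ => key i
      _ = d * (d * M ^ 2) := by simp [mul_comm]
  have hdetP : C.det * C.det ≤ ((Real.sqrt d * M) ^ d) ^ 2 := by
    rw [hdet]
    calc ∏ i, hH.eigenvalues i ≤ ((∑ i, hH.eigenvalues i) / d) ^ d :=
          amgm_fin hd _ (fun i => hP.eigenvalues_nonneg i)
      _ ≤ ((d:ℝ) * M ^ 2) ^ d := by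
          refine pow_le_pow_left₀
            (div_nonneg (Finset.sum_nonneg fun i _ => hP.eigenvalues_nonneg i) hd'.le) ?_ d
          rw [div_le_iff₀ hd', ← htr]
          calc (C.conjTranspose * C).trace ≤ d * (d * M^2) := htr_le
            _ = (d:ℝ) * M ^ 2 * d := by ring
      _ = ((Real.sqrt d * M) ^ d) ^ 2 := by
          rw [← pow_mul, mul_comm d 2, pow_mul]
          congr 1
          rw [mul_pow, Real.sq_sqrt (le_of_lt hd')]
  have hrhs : 0 ≤ (Real.sqrt d * M) ^ d := by positivity
  calc |C.det| = Real.sqrt (|C.det| ^ 2) := (Real.sqrt_sq (abs_nonneg _)).symm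
    _ = Real.sqrt (C.det * C.det) := by rw [sq_abs, sq]
    _ ≤ Real.sqrt (((Real.sqrt d * M) ^ d) ^ 2) := Real.sqrt_le_sqrt hdetP
    _ = (Real.sqrt d * M) ^ d := Real.sqrt_sq hrhs

/-- One elimination step on the determinant: cofactor expansion after row operations. -/
lemma step_det {d : ℕ} (C : Matrix (Fin (d+1)) (Fin (d+1)) ℝ) (h00 : C 0 0 ≠ 0) :
    C.det = C 0 0 * (Matrix.of fun a b : Fin d =>
      C a.succ b.succ - C a.succ 0 * C 0 b.succ / C 0 0).det := by
  classical
  set c : Fin (d+1) → ℝ := fun a => if a = 0 then 0 else -(C a 0 / C 0 0) with hc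
  set C' : Matrix (Fin (d+1)) (Fin (d+1)) ℝ := Matrix.of fun a b => C a b + c a * C 0 b with hC'
  have hdet1 : C'.det = C.det :=
    Matrix.det_eq_of_forall_row_eq_smul_add_const c 0 (if_pos rfl) fun i j => rfl
  have hcol : ∀ i : Fin (d+1), i ≠ 0 → C' i 0 = 0 := by
    intro i hi
    simp only [hC', hc, Matrix.of_apply, if_neg hi]
    field_simp
    ring
  have h00' : C' 0 0 = C 0 0 := by simp [hC', hc]
  have hsub : C'.submatrix Fin.succ Fin.succ = Matrix.of (fun a b : Fin d =>
      C a.succ b.succ - C a.succ 0 * C 0 b.succ / C 0 0) := by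
    ext a b
    simp only [Matrix.submatrix_apply, hC', hc, Matrix.of_apply, if_neg (Fin.succ_ne_zero a)]
    ring
  have hexp : C'.det = C 0 0 * (C'.submatrix Fin.succ Fin.succ).det := by
    rw [Matrix.det_succ_column_zero]
    rw [Fintype.sum_eq_single (0 : Fin (d+1))]
    · rw [h00', Fin.succAbove_zero]
      simp
    · intro i hi
      rw [hcol i hi]
      ring
  rw [← hdet1, hexp, hsub]

set_option maxRecDepth 8000 in
/-- The product of `d` consecutive pivot magnitudes starting after step `r` equals the
absolute determinant of the corresponding `d × d` pivot submatrix of `A^{(r)}`. -/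
lemma detProd {m n : ℕ} (A : Matrix (Fin m) (Fin n) ℝ) (piv : ℕ → Fin m × Fin n) :
    ∀ d r : ℕ, (∀ s, s < d → geIter A piv (r + s) (piv (r + s)).1 (piv (r + s)).2 ≠ 0) →
    ∏ s ∈ Finset.range d, |geIter A piv (r + s) (piv (r + s)).1 (piv (r + s)).2| =
      |(Matrix.of fun a b : Fin d =>
        geIter A piv r (piv (r + (a:ℕ))).1 (piv (r + (b:ℕ))).2).det| := by
  intro d
  induction d with
  | zero => intro r _; simp [Matrix.det_isEmpty]
  | succ d ih =>
    intro r hne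
    set C : Matrix (Fin (d+1)) (Fin (d+1)) ℝ := Matrix.of fun a b =>
      geIter A piv r (piv (r + (a:ℕ))).1 (piv (r + (b:ℕ))).2 with hC
    have h00 : C 0 0 ≠ 0 := by
      have h := hne 0 (Nat.succ_pos d)
      rw [hC]
      simpa using h
    have hinner : (Matrix.of fun a b : Fin d =>
        C a.succ b.succ - C a.succ 0 * C 0 b.succ / C 0 0) = Matrix.of fun a b : Fin d =>
        geIter A piv (r+1) (piv ((r+1) + (a:ℕ))).1 (piv ((r+1) + (b:ℕ))).2 := by
      ext a b
      have ea : (r+1) + (a:ℕ) = r + ((a:ℕ)+1) := by omega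
      have eb : (r+1) + (b:ℕ) = r + ((b:ℕ)+1) := by omega
      rw [hC]
      simp only [Matrix.of_apply, Fin.val_succ, Fin.val_zero, Nat.add_zero]
      rw [show geIter A piv (r+1) = geStep (geIter A piv r) (piv r).1 (piv r).2 from rfl]
      simp only [geStep, Matrix.of_apply]
      rw [ea, eb]
    rw [step_det C h00, abs_mul, Finset.prod_range_succ']
    have e2 : ∀ s : ℕ, r + (s + 1) = (r + 1) + s := fun s => by omega
    have hshift : ∏ s ∈ Finset.range d,
        |geIter A piv (r + (s + 1)) (piv (r + (s + 1))).1 (piv (r + (s + 1))).2| =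
        ∏ s ∈ Finset.range d,
        |geIter A piv ((r+1) + s) (piv ((r+1) + s)).1 (piv ((r+1) + s)).2| := by
      refine Finset.prod_congr rfl fun s _ => by rw [e2 s]
    rw [hshift, ih (r+1) (fun s hs => by
      have := hne (s+1) (by omega)
      rwa [e2 s] at this), hinner]
    have h0 : C 0 0 = geIter A piv (r + 0) (piv (r + 0)).1 (piv (r + 0)).2 := by
      simp [hC]
    rw [h0]
    ring

/-- **Hadamard bound on the product of remaining pivots.** For every `0 ≤ r ≤ k-1`,
`∏_{i=r+1}^k p_i ≤ ((k-r)^{1/2} β_{r+1}⁻¹ p_{r+1})^{k-r}` (pivot magnitudes `p`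
and qualities `β` are 1-indexed). -/
theorem prod_pivots_le_hadamard
    (m n k : ℕ) (A : Matrix (Fin m) (Fin n) ℝ) (hA : A ≠ 0)
    (hk : 1 ≤ k)
    (piv : ℕ → Fin m × Fin n)
    (hpiv : ∀ r < k, geIter A piv r (piv r).1 (piv r).2 ≠ 0)
    (hrows : ∀ r < k, ∀ s < k, (piv r).1 = (piv s).1 → r = s)
    (hcols : ∀ r < k, ∀ s < k, (piv r).2 = (piv s).2 → r = s)
    (β : ℕ → ℝ)
    (hβpos : ∀ r, 1 ≤ r → r ≤ k → 0 < β r)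
    (hβle : ∀ r, 1 ≤ r → r ≤ k → β r ≤ 1)
    (hβdef : ∀ r, 1 ≤ r → r ≤ k →
      β r = pivMag A piv r / maxAbs (geIter A piv (r - 1))) :
    ∀ r < k,
      ∏ i ∈ Finset.Icc (r + 1) k, pivMag A piv i ≤
        (Real.sqrt ((k : ℝ) - (r : ℝ)) * (β (r + 1))⁻¹ * pivMag A piv (r + 1)) ^ (k - r) := by
  intro r hr
  set d := k - r with hd
  have hdpos : 0 < d := by omega
  -- the pivot magnitude p_{r+1}
  have hp : pivMag A piv (r+1) = |geIter A piv r (piv r).1 (piv r).2| := by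
    simp [pivMag]
  have hppos : 0 < pivMag A piv (r+1) := by
    rw [hp]; exact abs_pos.mpr (hpiv r hr)
  -- the max entry M of A^{(r)}
  set M := maxAbs (geIter A piv r) with hM
  have hent : ∀ s t, |geIter A piv r s t| ≤ M := fun s t => le_maxAbs _ s t
  have hMpos : 0 < M := lt_of_lt_of_le hppos (by rw [hp]; exact hent _ _)
  -- β_{r+1}⁻¹ * p_{r+1} = M
  have hβ : β (r+1) = pivMag A piv (r+1) / M := by
    have := hβdef (r+1) (by omega) (by omega)
    simpa [hM] using this
  have hβinv : (β (r+1))⁻¹ * pivMag A piv (r+1) = M := by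
    rw [hβ]
    field_simp
  -- rewrite the product over Icc as a product over range d
  have hne : ∀ s, s < d → geIter A piv (r + s) (piv (r + s)).1 (piv (r + s)).2 ≠ 0 :=
    fun s hs => hpiv (r + s) (by omega)
  have hprod : ∏ i ∈ Finset.Icc (r + 1) k, pivMag A piv i =
      ∏ s ∈ Finset.range d, |geIter A piv (r + s) (piv (r + s)).1 (piv (r + s)).2| := by
    rw [← Finset.Ico_add_one_right_eq_Icc, Finset.prod_Ico_eq_prod_range]
    have hcard : k + 1 - (r + 1) = d := by omega
    rw [hcard]
    refine Finset.prod_congr rfl fun s _ => ?_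
    have e : r + 1 + s - 1 = r + s := by omega
    simp [pivMag, e]
  -- cast of √(k - r)
  have hcast : ((k : ℝ) - (r : ℝ)) = (d : ℝ) := by
    rw [hd, Nat.cast_sub (le_of_lt hr)]
  rw [hprod, detProd A piv d r hne, hcast, mul_assoc, hβinv]
  exact hadamard_bound _ hMpos.le (fun a b => hent _ _)
end

section
/- Let k ≥ 3, let q_1,…,q_k be real numbers, and let β_1,…,β_{k−1} ∈ (0,1]. Suppose that (i) for every 1 ≤ r ≤ k−2, ∑_{i=r+2}^{k} q_i ≤ ((k−r)/2)·log(k−r) − (k−r)·log β_{r+1} + (k−r−1)·q_{r+1}, and (ii) ∑_{i=1}^{k} q_i ≤ (k/2)·log k − k·log β_1 + k·q_1. Then q_k − q_1 ≤ log f(k) + (1/2)·log k − 2·log β_1 − ∑_{r=1}^{k−2} (log β_{r+1})/(k−r−1), where f(k) = (∏_{r=2}^{k} r^{1/(r−1)})^{1/2}. -/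
open Finset Real

private lemma wilkinson_key_aux
    (k : ℕ) (hk : 3 ≤ k) (q β D : ℕ → ℝ)
    (hD : ∀ r, D r =
      (k : ℝ) / (2 * ((k : ℝ) - 1)) * Real.log k
        - (k : ℝ) / ((k : ℝ) - 1) * Real.log (β 1)
        + ∑ j ∈ Finset.Icc 1 r,
            (Real.log ((k : ℝ) - j) / (2 * ((k : ℝ) - j - 1))
              - Real.log (β (j + 1)) / ((k : ℝ) - j - 1)))
    (h1 : ∀ r, 1 ≤ r → r ≤ k - 2 →
      ∑ i ∈ Finset.Icc (r + 2) k, q i ≤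
        ((k : ℝ) - r) / 2 * Real.log ((k : ℝ) - r) -
          ((k : ℝ) - r) * Real.log (β (r + 1)) + ((k : ℝ) - r - 1) * q (r + 1))
    (h2 : ∑ i ∈ Finset.Icc 1 k, q i ≤
        (k : ℝ) / 2 * Real.log k - (k : ℝ) * Real.log (β 1) + (k : ℝ) * q 1) :
    ∀ r, r ≤ k - 2 →
      ∑ i ∈ Finset.Icc (r + 2) k, q i ≤ ((k : ℝ) - r - 1) * (q 1 + D r) := by
  have hk3 : (3 : ℝ) ≤ (k : ℝ) := by exact_mod_cast hk
  have hk1 : (k : ℝ) - 1 ≠ 0 := by linarith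
  intro r
  induction r with
  | zero =>
    intro _
    have hsplit : Finset.Icc 1 k = insert 1 (Finset.Icc 2 k) := by
      ext x; simp [Finset.mem_Icc, Finset.mem_insert]; omega
    have h1n : (1 : ℕ) ∉ Finset.Icc 2 k := by simp
    rw [hsplit, Finset.sum_insert h1n] at h2
    have hD0 : D 0 = (k : ℝ) / (2 * ((k : ℝ) - 1)) * Real.log k
        - (k : ℝ) / ((k : ℝ) - 1) * Real.log (β 1) := by
      rw [hD 0]; simp
    push_cast
    rw [hD0]
    have heq : ((k : ℝ) - 0 - 1) * (q 1 + ((k : ℝ) / (2 * ((k : ℝ) - 1)) * Real.log k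
        - (k : ℝ) / ((k : ℝ) - 1) * Real.log (β 1)))
        = (k : ℝ) / 2 * Real.log k - (k : ℝ) * Real.log (β 1) + ((k : ℝ) - 1) * q 1 := by
      field_simp
      ring
    rw [heq]
    linarith
  | succ n ih =>
    intro hn
    have hn' : n ≤ k - 2 := by omega
    have hnk : n + 3 ≤ k := by omega
    have hnkR : (n : ℝ) + 3 ≤ (k : ℝ) := by exact_mod_cast hnk
    have hkn2 : (2 : ℝ) ≤ (k : ℝ) - n - 1 := by linarith
    have hkn3 : (1 : ℝ) ≤ (k : ℝ) - n - 2 := by linarith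
    have hpos : (0 : ℝ) < (k : ℝ) - n - 1 := by linarith
    have hne : ((k : ℝ) - n - 2) ≠ 0 := by linarith
    have ihn := ih hn'
    have hrec := h1 (n + 1) (by omega) hn
    -- split the sum
    have hsplit : Finset.Icc (n + 2) k = insert (n + 2) (Finset.Icc (n + 3) k) := by
      ext x; simp [Finset.mem_Icc, Finset.mem_insert]; omega
    have hnot : (n + 2) ∉ Finset.Icc (n + 3) k := by simp
    rw [hsplit, Finset.sum_insert hnot] at ihn
    set A := ∑ i ∈ Finset.Icc (n + 3) k, q i with hA
    have hrec' : A ≤ ((k : ℝ) - n - 1) / 2 * Real.log ((k : ℝ) - n - 1)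
        - ((k : ℝ) - n - 1) * Real.log (β (n + 2))
        + ((k : ℝ) - n - 2) * q (n + 2) := by
      have e1 : ((k : ℝ) - (↑(n + 1) : ℝ)) = (k : ℝ) - n - 1 := by push_cast; ring
      rw [e1] at hrec
      have e3 : ((k : ℝ) - n - 1 - 1) = (k : ℝ) - n - 2 := by ring
      rw [e3] at hrec
      exact hrec
    have hDsucc : D (n + 1) = D n
        + (Real.log ((k : ℝ) - n - 1) / (2 * ((k : ℝ) - n - 2))
          - Real.log (β (n + 2)) / ((k : ℝ) - n - 2)) := by
      rw [hD (n + 1), hD n, Finset.sum_Icc_succ_top (by omega : 1 ≤ n + 1)]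
      have e : n + 1 + 1 = n + 2 := rfl
      rw [e]
      push_cast
      rw [show (k : ℝ) - (↑n + 1) - 1 = (k : ℝ) - ↑n - 2 from by ring,
        show (k : ℝ) - (↑n + 1) = (k : ℝ) - ↑n - 1 from by ring]
      ring
    -- combine
    have hcomb : ((k : ℝ) - n - 1) * A ≤
        ((k : ℝ) - n - 1) / 2 * Real.log ((k : ℝ) - n - 1)
        - ((k : ℝ) - n - 1) * Real.log (β (n + 2))
        + ((k : ℝ) - n - 2) * (((k : ℝ) - n - 1) * (q 1 + D n)) := by
      have hB : q (n + 2) + A ≤ ((k : ℝ) - n - 1) * (q 1 + D n) := ihn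
      have hmul := mul_le_mul_of_nonneg_left hB
        (show (0 : ℝ) ≤ (k : ℝ) - n - 2 by linarith)
      nlinarith [hrec', hmul]
    have hgoal : ((k : ℝ) - ↑(n + 1) - 1) * (q 1 + D (n + 1)) * ((k : ℝ) - n - 1)
        = ((k : ℝ) - n - 1) / 2 * Real.log ((k : ℝ) - n - 1)
        - ((k : ℝ) - n - 1) * Real.log (β (n + 2))
        + ((k : ℝ) - n - 2) * (((k : ℝ) - n - 1) * (q 1 + D n)) := by
      rw [hDsucc]
      push_cast
      field_simp
      ring
    have hfinal : A * ((k : ℝ) - n - 1) ≤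
        ((k : ℝ) - ↑(n + 1) - 1) * (q 1 + D (n + 1)) * ((k : ℝ) - n - 1) := by
      rw [hgoal]
      linarith [hcomb]
    exact le_of_mul_le_mul_right hfinal hpos


/-- **The key inequality manipulation in Wilkinson's argument with pivoting mistakes.**
Given reals `q_1, …, q_k` and pivot qualities `β_1, …, β_{k-1} ∈ (0,1]` satisfying the
logarithmic pivot inequalities, one has
`q_k - q_1 ≤ log f(k) + (1/2) log k - 2 log β₁ - ∑_{r=1}^{k-2} log β_{r+1} / (k-r-1)`,
where `f(k) = (∏_{r=2}^k r^{1/(r-1)})^{1/2}`. -/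
theorem wilkinson_log_inequality
    (k : ℕ) (hk : 3 ≤ k) (q β : ℕ → ℝ)
    (hβ : ∀ r, 1 ≤ r → r ≤ k - 1 → 0 < β r ∧ β r ≤ 1)
    (h1 : ∀ r, 1 ≤ r → r ≤ k - 2 →
      ∑ i ∈ Finset.Icc (r + 2) k, q i ≤
        ((k : ℝ) - r) / 2 * Real.log ((k : ℝ) - r) -
          ((k : ℝ) - r) * Real.log (β (r + 1)) + ((k : ℝ) - r - 1) * q (r + 1))
    (h2 : ∑ i ∈ Finset.Icc 1 k, q i ≤
        (k : ℝ) / 2 * Real.log k - (k : ℝ) * Real.log (β 1) + (k : ℝ) * q 1) :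
    q k - q 1 ≤
      Real.log ((∏ r ∈ Finset.Icc 2 k, (r : ℝ) ^ (((r : ℝ) - 1)⁻¹)) ^ ((1 : ℝ) / 2)) +
        (1 / 2 : ℝ) * Real.log k - 2 * Real.log (β 1) -
        ∑ r ∈ Finset.Icc 1 (k - 2), Real.log (β (r + 1)) / ((k : ℝ) - r - 1) := by
  have hk3 : (3 : ℝ) ≤ (k : ℝ) := by exact_mod_cast hk
  have hk1 : (k : ℝ) - 1 ≠ 0 := by linarith
  -- the accumulated bound, introduced opaquely
  obtain ⟨D, hD⟩ : ∃ D : ℕ → ℝ, ∀ r, D r =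
      (k : ℝ) / (2 * ((k : ℝ) - 1)) * Real.log k
        - (k : ℝ) / ((k : ℝ) - 1) * Real.log (β 1)
        + ∑ j ∈ Finset.Icc 1 r,
            (Real.log ((k : ℝ) - j) / (2 * ((k : ℝ) - j - 1))
              - Real.log (β (j + 1)) / ((k : ℝ) - j - 1)) :=
    ⟨_, fun r => rfl⟩
  have key := wilkinson_key_aux k hk q β D hD h1 h2
  -- apply at r = k - 2
  have hfin := key (k - 2) le_rfl
  have e1 : (k - 2) + 2 = k := by omega
  have e2 : ((k : ℝ) - (↑(k - 2) : ℝ) - 1) = 1 := by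
    have : ((k - 2 : ℕ) : ℝ) = (k : ℝ) - 2 := by
      push_cast [Nat.cast_sub (by omega : 2 ≤ k)]; ring
    rw [this]; ring
  rw [e1, e2, one_mul] at hfin
  have hfin' : q k ≤ q 1 + D (k - 2) := by
    rwa [Finset.Icc_self, Finset.sum_singleton] at hfin
  -- log f(k)
  have hlogf : Real.log ((∏ r ∈ Finset.Icc 2 k, (r : ℝ) ^ (((r : ℝ) - 1)⁻¹)) ^ ((1 : ℝ) / 2))
      = (1 / 2 : ℝ) * ∑ r ∈ Finset.Icc 2 k, Real.log r / ((r : ℝ) - 1) := by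
    have hppos : ∀ r ∈ Finset.Icc 2 k, (0 : ℝ) < (r : ℝ) ^ (((r : ℝ) - 1)⁻¹) := by
      intro r hr
      have : (0 : ℝ) < r := by
        simp only [Finset.mem_Icc] at hr
        have : (2 : ℝ) ≤ (r : ℝ) := by exact_mod_cast hr.1
        linarith
      exact Real.rpow_pos_of_pos this _
    have hprodpos : (0 : ℝ) < ∏ r ∈ Finset.Icc 2 k, (r : ℝ) ^ (((r : ℝ) - 1)⁻¹) :=
      Finset.prod_pos hppos
    rw [Real.log_rpow hprodpos, Real.log_prod (fun x hx => (hppos x hx).ne')]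
    congr 1
    apply Finset.sum_congr rfl
    intro r hr
    have hrpos : (0 : ℝ) < r := by
      simp only [Finset.mem_Icc] at hr
      have : (2 : ℝ) ≤ (r : ℝ) := by exact_mod_cast hr.1
      linarith
    rw [Real.log_rpow hrpos, inv_mul_eq_div]
  -- reindex the middle sum
  have hreindex : ∑ j ∈ Finset.Icc 1 (k - 2),
      Real.log ((k : ℝ) - j) / (2 * ((k : ℝ) - j - 1))
      = ∑ s ∈ Finset.Icc 2 (k - 1), Real.log s / (2 * ((s : ℝ) - 1)) := by
    apply Finset.sum_nbij' (fun j => k - j) (fun s => k - s)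
    · intro a ha; simp only [Finset.mem_Icc] at ha ⊢; omega
    · intro a ha; simp only [Finset.mem_Icc] at ha ⊢; omega
    · intro a ha; simp only [Finset.mem_Icc] at ha; omega
    · intro a ha; simp only [Finset.mem_Icc] at ha; omega
    · intro a ha
      simp only [Finset.mem_Icc] at ha
      have hcast : ((k - a : ℕ) : ℝ) = (k : ℝ) - a := by
        push_cast [Nat.cast_sub (by omega : a ≤ k)]; ring
      rw [hcast]
  -- split the log f sum at the top
  have hsplitf : ∑ r ∈ Finset.Icc 2 k, Real.log r / ((r : ℝ) - 1)
      = (∑ r ∈ Finset.Icc 2 (k - 1), Real.log r / ((r : ℝ) - 1))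
        + Real.log k / ((k : ℝ) - 1) := by
    have hkk : k = (k - 1) + 1 := by omega
    rw [hkk, Finset.sum_Icc_succ_top (by omega : 2 ≤ (k - 1) + 1)]
    have hcast : ((k - 1 + 1 : ℕ) : ℝ) = (k : ℝ) := by
      push_cast [Nat.cast_sub (by omega : 1 ≤ k)]; ring
    rw [hcast, Nat.add_sub_cancel]
  -- β 1 bound
  have hβ1 := hβ 1 le_rfl (by omega)
  have hlogβ1 : Real.log (β 1) ≤ 0 := Real.log_nonpos hβ1.1.le hβ1.2
  have hcoef : -((k : ℝ) / ((k : ℝ) - 1)) * Real.log (β 1) ≤ -2 * Real.log (β 1) := by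
    have h2k : (k : ℝ) / ((k : ℝ) - 1) ≤ 2 := by
      rw [div_le_iff₀ (by linarith : (0 : ℝ) < (k : ℝ) - 1)]
      linarith
    nlinarith
  -- assemble
  rw [hlogf, hsplitf]
  have hDval : D (k - 2) = (k : ℝ) / (2 * ((k : ℝ) - 1)) * Real.log k
      - (k : ℝ) / ((k : ℝ) - 1) * Real.log (β 1)
      + ((∑ s ∈ Finset.Icc 2 (k - 1), Real.log s / (2 * ((s : ℝ) - 1)))
        - ∑ j ∈ Finset.Icc 1 (k - 2), Real.log (β (j + 1)) / ((k : ℝ) - j - 1)) := by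
    rw [hD (k - 2), Finset.sum_sub_distrib, hreindex]
  have hsumhalf : ∑ s ∈ Finset.Icc 2 (k - 1), Real.log s / (2 * ((s : ℝ) - 1))
      = (1 / 2 : ℝ) * ∑ s ∈ Finset.Icc 2 (k - 1), Real.log s / ((s : ℝ) - 1) := by
    rw [Finset.mul_sum]
    refine Finset.sum_congr rfl fun s hs => ?_
    simp only [Finset.mem_Icc] at hs
    have hs2 : (2 : ℝ) ≤ (s : ℝ) := by exact_mod_cast hs.1
    have hs1 : (s : ℝ) - 1 ≠ 0 := by linarith
    field_simp
  rw [hDval, hsumhalf] at hfin'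
  have hlogkeq : (k : ℝ) / (2 * ((k : ℝ) - 1)) * Real.log k
      = (1 / 2 : ℝ) * (Real.log k / ((k : ℝ) - 1)) + (1 / 2 : ℝ) * Real.log k := by
    field_simp
    ring
  rw [hlogkeq] at hfin'
  linarith [hfin', hcoef]
end
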